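/- arXiv:1408.1296 — 3 statements merged into one kernel-verified Lean document; each statement's English description precedes it below -/
import Mathlib

section
/- Let X_1,...,X_n be n real-valued (possibly dependent) random variables with order statistics X_{1:n} ≤ ... ≤ X_{n:n}, and suppose Assumption A holds: the distribution function of X_{n:n} has infinite upper endpoint and belongs to GMDA(h) for some positive scaling function h, condition (DS1) holds for this h for every t > 0, and condition (DS2) holds for this h for some L > 0. Then for any 0 < a ≤ b < ∞ and 0 ≤ d < ∞, the relation P(∑_{i=0}^{n-1} c_i X_{n-i:n} > x) ~ P(c_0 X_{n:n} > x) ~ ∑_{i=1}^{n} P(c_0 X_i > x) as x → ∞ holds uniformly for (c_0, c_1, ..., c_{n-1}) ∈ [a,b] × [0,d]^{n-1}; that is, the ratios of the three quantities converge to 1 uniformly over this compact set of weight vectors. -/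
open MeasureTheory Filter Topology Asymptotics

noncomputable section

/-- Tail probability `P(Y > x)` of a real random variable. -/
def tailP {Ω : Type*} [MeasurableSpace Ω] (μ : Measure Ω) (Y : Ω → ℝ) (x : ℝ) : ℝ :=
  (μ {ω | x < Y ω}).toReal

/-- The maximum `X_{n:n}` of finitely many random variables. -/
def maxRV {Ω : Type*} {n : ℕ} (X : Fin n → Ω → ℝ) (ω : Ω) : ℝ := ⨆ i, X i ω

/-- The `i`-th largest value (descending order statistic, `0`-indexed):
`ordDesc X i = X_{n-i:n}`. -/
def ordDesc {Ω : Type*} {n : ℕ} (X : Fin n → Ω → ℝ) (i : Fin n) (ω : Ω) : ℝ :=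
  (((List.ofFn fun j => X j ω).mergeSort fun a b => decide (b ≤ a)).getD i 0)

/-- A tail function `T = 1 - F` is long-tailed (`F ∈ 𝓛`). -/
def LongTailedT (T : ℝ → ℝ) : Prop :=
  (∀ x : ℝ, 0 ≤ x → 0 < T x) ∧
  ∀ y : ℝ, Tendsto (fun x => T (x + y) / T x) atTop (𝓝 1)

/-- A function is dominatedly varying. -/
def DomVarFun (h : ℝ → ℝ) : Prop :=
  ∀ y : ℝ, 0 < y →
    (0 : EReal) < atTop.liminf (fun x => ((h (x * y) / h x : ℝ) : EReal)) ∧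
    atTop.limsup (fun x => ((h (x * y) / h x : ℝ) : EReal)) < ⊤

/-- A function is weakly self-neglecting. -/
def WeaklySelfNeg (h : ℝ → ℝ) : Prop :=
  ∀ y : ℝ, atTop.limsup (fun x => ((h (x + y * h x) / h x : ℝ) : EReal)) < ⊤

/-- `h ∈ 𝓗_F` where `T = 1 - F` is the tail of `F`. -/
def MemScaleClass (T h : ℝ → ℝ) : Prop :=
  (∀ᶠ x in atTop, 0 < h x) ∧
  (h =o[atTop] fun x : ℝ => x) ∧
  (∀ y : ℝ, Tendsto (fun x => T (x + y * h x) / T x) atTop (𝓝 1)) ∧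
  WeaklySelfNeg h

/-- Upper endpoint `x_F = sup {x : F(x) < 1}` of a distribution with tail `T = 1 - F`. -/
def upEnd (T : ℝ → ℝ) : EReal := sSup ((fun x : ℝ => (x : EReal)) '' {x | 0 < T x})

open Classical in
/-- The filter of "`x → x_F`". -/
def endFilter (T : ℝ → ℝ) : Filter ℝ :=
  if upEnd T = ⊤ then atTop else 𝓝[<] (upEnd T).toReal

/-- `F ∈ GMDA(h)` for `T = 1 - F`. -/
def MemGMDA (T h : ℝ → ℝ) : Prop :=
  (∀ x, 0 < h x) ∧
  ∀ y : ℝ, Tendsto (fun x => T (x + y * h x) / T x) (endFilter T) (𝓝 (Real.exp (-y)))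

/-- Condition (DS1) (for all `t > 0`). -/
def DS1 {Ω : Type*} [MeasurableSpace Ω] (μ : Measure Ω) {n : ℕ} (X : Fin n → Ω → ℝ)
    (h : ℝ → ℝ) : Prop :=
  ∀ t : ℝ, 0 < t → ∀ i j : Fin n, i ≠ j →
    Tendsto (fun x => (μ {ω | t * h x < |X i ω| ∧ x < X j ω}).toReal / tailP μ (maxRV X) x)
      atTop (𝓝 0)

/-- Condition (DS2) for a given `L > 0`. -/
def DS2 {Ω : Type*} [MeasurableSpace Ω] (μ : Measure Ω) {n : ℕ} (X : Fin n → Ω → ℝ)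
    (h : ℝ → ℝ) (L : ℝ) : Prop :=
  ∀ i j : Fin n, i < j →
    Tendsto (fun x => (μ {ω | L * h x < X i ω ∧ L * h x < X j ω}).toReal / tailP μ (maxRV X) x)
      atTop (𝓝 0)

/-- Condition (v1). -/
def CondV1 {Ω : Type*} [MeasurableSpace Ω] (μ : Measure Ω) {n : ℕ} (X : Fin n → Ω → ℝ) : Prop :=
  ∀ i j : Fin n, i < j →
    Tendsto (fun x => (μ {ω | x < X i ω ∧ x < X j ω}).toReal / tailP μ (maxRV X) x)
      atTop (𝓝 0)

/-- Assumption A: `X_{n:n}` has an infinite upper endpoint, `X_{n:n} ∈ GMDA(h)`,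
(DS1) holds for all `t > 0` and (DS2) for some `L > 0`. -/
def AssumptionA {Ω : Type*} [MeasurableSpace Ω] (μ : Measure Ω) {n : ℕ}
    (X : Fin n → Ω → ℝ) : Prop :=
  ∃ h : ℝ → ℝ,
    (∀ x : ℝ, 0 < tailP μ (maxRV X) x) ∧
    MemGMDA (tailP μ (maxRV X)) h ∧
    DS1 μ X h ∧ ∃ L : ℝ, 0 < L ∧ DS2 μ X h L

/-- Assumption B: `X_{n:n} ∈ 𝓛` and some `h ∈ 𝓗_{X_{n:n}}` satisfies (DS1) for all `t > 0`
and (DS2) for some `L > 0`. -/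
def AssumptionB {Ω : Type*} [MeasurableSpace Ω] (μ : Measure Ω) {n : ℕ}
    (X : Fin n → Ω → ℝ) : Prop :=
  LongTailedT (tailP μ (maxRV X)) ∧
  ∃ h : ℝ → ℝ, MemScaleClass (tailP μ (maxRV X)) h ∧
    DS1 μ X h ∧ ∃ L : ℝ, 0 < L ∧ DS2 μ X h L

/-- Assumption C: `X_{n:n} ∈ 𝓛 ∩ 𝓓` and some dominatedly varying `h ∈ 𝓗_{X_{n:n}}`
satisfies (DS1) for all `t > 0`. -/
def AssumptionC {Ω : Type*} [MeasurableSpace Ω] (μ : Measure Ω) {n : ℕ}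
    (X : Fin n → Ω → ℝ) : Prop :=
  LongTailedT (tailP μ (maxRV X)) ∧ DomVarFun (tailP μ (maxRV X)) ∧
  ∃ h : ℝ → ℝ, DomVarFun h ∧ MemScaleClass (tailP μ (maxRV X)) h ∧ DS1 μ X h

/-- The uniform (in the weights `c ∈ K`) max-sum asymptotic equivalence (max-sum0):
`P(∑ c_i X_{n-i:n} > x) ~ P(c_0 X_{n:n} > x) ~ ∑ P(c_0 X_i > x)` uniformly on `K`. -/
def UnifMaxSum {Ω : Type*} [MeasurableSpace Ω] (μ : Measure Ω) {n : ℕ} [NeZero n]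
    (X : Fin n → Ω → ℝ) (K : Set (Fin n → ℝ)) : Prop :=
  TendstoUniformlyOn
    (fun x (c : Fin n → ℝ) =>
      tailP μ (fun ω => ∑ i, c i * ordDesc X i ω) x /
        tailP μ (fun ω => c 0 * maxRV X ω) x) 1 atTop K ∧
  TendstoUniformlyOn
    (fun x (c : Fin n → ℝ) =>
      tailP μ (fun ω => c 0 * maxRV X ω) x /
        ∑ i, tailP μ (fun ω => c 0 * X i ω) x) 1 atTop K

end


section Aux
open List MeasureTheory Filter Topology

theorem two_le_countP {α : Type*} (p : α → Bool) :
    ∀ (l : List α) (i j : ℕ) (hi : i < l.length) (hj : j < l.length), i ≠ j →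
    p (l[i]) → p (l[j]) → 2 ≤ l.countP p := by
  intro l
  induction l with
  | nil => intro i j hi; simp at hi
  | cons a tl ih =>
    intro i j hi hj hij hpi hpj
    match i, j with
    | 0, 0 => exact absurd rfl hij
    | 0, (j+1) =>
      simp only [List.getElem_cons_zero, List.getElem_cons_succ] at hpi hpj
      have hj' : j < tl.length := by simpa using hj
      have : 0 < tl.countP p := List.countP_pos_iff.mpr ⟨_, List.getElem_mem hj', hpj⟩
      rw [List.countP_cons, hpi]
      norm_num
      omega
    | (i+1), 0 =>
      simp only [List.getElem_cons_zero, List.getElem_cons_succ] at hpi hpj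
      have hi' : i < tl.length := by simpa using hi
      have : 0 < tl.countP p := List.countP_pos_iff.mpr ⟨_, List.getElem_mem hi', hpi⟩
      rw [List.countP_cons, hpj]
      norm_num
      omega
    | (i+1), (j+1) =>
      simp only [List.getElem_cons_succ] at hpi hpj
      have := ih i j (by simpa using hi) (by simpa using hj) (by omega) hpi hpj
      rw [List.countP_cons]
      omega

theorem exists_pair_of_two_le_countP {α : Type*} {n : ℕ} {f : Fin n → α} (p : α → Bool)
    (h2 : 2 ≤ (List.ofFn f).countP p) :
    ∃ u v : Fin n, u ≠ v ∧ p (f u) ∧ p (f v) := by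
  rw [List.ofFn_eq_map, List.countP_map] at h2
  rw [List.countP_eq_length_filter] at h2
  set l := (List.finRange n).filter (p ∘ f) with hl
  have hnd : l.Nodup := (List.nodup_finRange n).filter _
  match l, h2, hnd with
  | u :: v :: rest, _, hnd =>
    have hu : u ∈ (List.finRange n).filter (p ∘ f) := by rw [← hl]; simp
    have hv : v ∈ (List.finRange n).filter (p ∘ f) := by rw [← hl]; simp
    have huv : u ≠ v := by simp [List.nodup_cons] at hnd; tauto
    refine ⟨u, v, huv, ?_, ?_⟩
    · simpa using (List.of_mem_filter hu)
    · simpa using (List.of_mem_filter hv)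


section Sorting
variable {n : ℕ} (f : Fin n → ℝ)

noncomputable def sortD (f : Fin n → ℝ) : List ℝ := (List.ofFn f).mergeSort fun a b => decide (b ≤ a)

theorem sortD_length : (sortD f).length = n := by
  simp [sortD, List.length_mergeSort]

theorem sortD_perm : sortD f ~ List.ofFn f := List.mergeSort_perm _ _

theorem sortD_pairwise : (sortD f).Pairwise (fun a b => b ≤ a) := by
  have := List.pairwise_mergeSort (le := fun a b : ℝ => decide (b ≤ a))
    (fun a b c hab hbc => by simp_all; linarith)
    (fun a b => by simp [le_total b a])
    (List.ofFn f)
  exact this.imp (by simp_all)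

theorem sortD_anti {i j : ℕ} (hi : i ≤ j) (hj : j < n) :
    (sortD f).getD j 0 ≤ (sortD f).getD i 0 := by
  have hl := sortD_length f
  rcases eq_or_lt_of_le hi with rfl | hlt
  · exact le_refl _
  · rw [List.getD_eq_getElem _ _ (by omega), List.getD_eq_getElem _ _ (by omega)]
    exact (List.pairwise_iff_getElem.mp (sortD_pairwise f)) i j (by omega) (by omega) hlt

theorem sortD_mem (i : Fin n) : ∃ j, f j = (sortD f).getD i 0 := by
  have hl := sortD_length f
  have : (sortD f).getD i 0 ∈ sortD f := by
    rw [List.getD_eq_getElem _ _ (by omega)]; exact List.getElem_mem _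
  have : (sortD f).getD i 0 ∈ List.ofFn f := (sortD_perm f).mem_iff.mp this
  simpa [List.mem_ofFn, eq_comm] using this

theorem sortD_zero_eq_max [NeZero n] : (sortD f).getD 0 0 = ⨆ j, f j := by
  have hn : 0 < n := Nat.pos_of_ne_zero (NeZero.ne n)
  have hl := sortD_length f
  apply _root_.le_antisymm
  · obtain ⟨j, hj⟩ := sortD_mem f ⟨0, hn⟩
    rw [← hj]
    exact le_ciSup (Set.Finite.bddAbove (Set.finite_range f)) j
  · apply ciSup_le
    intro j
    have hmem : f j ∈ sortD f := (sortD_perm f).mem_iff.mpr (by simp [List.mem_ofFn])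
    obtain ⟨k, hk, hkeq⟩ := List.getElem_of_mem hmem
    rw [← hkeq, ← List.getD_eq_getElem _ 0 hk]
    exact sortD_anti f (Nat.zero_le k) (by omega)

theorem sortD_pair_indices {p1 p2 : ℝ → Prop} {i1 i2 : ℕ} (h12 : i1 ≠ i2)
    (hi1 : i1 < n) (hi2 : i2 < n)
    (hp1 : p1 ((sortD f).getD i1 0)) (hp2 : p2 ((sortD f).getD i2 0)) :
    ∃ u v : Fin n, u ≠ v ∧ p1 (f u) ∧ p2 (f v) := by
  classical
  have hl := sortD_length f
  -- two distinct positions satisfying p1 ∨ p2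
  have h2 : 2 ≤ (List.ofFn f).countP (fun x => decide (p1 x ∨ p2 x)) := by
    rw [← (sortD_perm f).countP_eq]
    refine two_le_countP _ _ i1 i2 (by omega) (by omega) h12 ?_ ?_
    · exact decide_eq_true (Or.inl (by
        rw [List.getD_eq_getElem _ 0 (by omega : i1 < (sortD f).length)] at hp1; exact hp1))
    · exact decide_eq_true (Or.inr (by
        rw [List.getD_eq_getElem _ 0 (by omega : i2 < (sortD f).length)] at hp2; exact hp2))
  obtain ⟨u, v, huv, hu, hv⟩ := exists_pair_of_two_le_countP _ h2
  simp only [decide_eq_true_eq] at hu hv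
  obtain ⟨w1, hw1⟩ := sortD_mem f ⟨i1, hi1⟩
  obtain ⟨w2, hw2⟩ := sortD_mem f ⟨i2, hi2⟩
  have hw1p : p1 (f w1) := by rw [hw1]; exact hp1
  have hw2p : p2 (f w2) := by rw [hw2]; exact hp2
  rcases hu with hu1 | hu2
  · rcases hv with hv1 | hv2
    · -- both satisfy p1; use w2 as p2 witness
      rcases ne_or_eq u w2 with h | rfl
      · exact ⟨u, w2, h, hu1, hw2p⟩
      · exact ⟨v, u, huv.symm, hv1, hw2p⟩
    · exact ⟨u, v, huv, hu1, hv2⟩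
  · rcases hv with hv1 | hv2
    · exact ⟨v, u, huv.symm, hv1, hu2⟩
    · rcases ne_or_eq v w1 with h | rfl
      · exact ⟨w1, v, h.symm, hw1p, hv2⟩
      · exact ⟨v, u, huv.symm, hw1p, hu2⟩
end Sorting


section Gmda
variable {T h : ℝ → ℝ}
variable (hT0 : ∀ x, 0 < T x) (hTanti : Antitone T) (hTtend : Tendsto T atTop (𝓝 0))
  (hh : ∀ x, 0 < h x)
  (hG : ∀ y : ℝ, Tendsto (fun x => T (x + y * h x) / T x) atTop (𝓝 (Real.exp (-y))))

include hT0 hTanti hTtend hh hG in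
theorem h_small (ε : ℝ) (hε : 0 < ε) : ∀ᶠ x in atTop, h x < ε * x := by
  by_contra hcon
  rw [Filter.not_eventually] at hcon
  have hy := hG (-(2/ε))
  rw [neg_neg] at hy
  have hev1 : ∀ᶠ x in atTop, T (x + -(2/ε) * h x) / T x ≤ Real.exp (2/ε) + 1 := by
    apply hy.eventually_le_const
    linarith [Real.exp_pos (2/ε)]
  have hev2 : ∀ᶠ x in atTop, T x < T 0 / (Real.exp (2/ε) + 1) := by
    apply hTtend.eventually_lt_const
    apply div_pos (hT0 0); positivity
  have hev3 : ∀ᶠ x in atTop, (0:ℝ) ≤ x := eventually_ge_atTop 0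
  obtain ⟨x, ⟨hx1, hx2, hx3⟩, hx4⟩ := ((hev1.and (hev2.and hev3)).and_frequently hcon).exists
  push_neg at hx4
  -- x + -(2/ε) * h x ≤ -x ≤ 0
  have harg : x + -(2/ε) * h x ≤ 0 := by
    have h2 : (2/ε) * h x ≥ 2 * x := by
      rw [ge_iff_le, div_mul_eq_mul_div, le_div_iff₀ hε]
      calc 2 * x * ε = 2 * (ε * x) := by ring
        _ ≤ 2 * h x := by linarith
        _ = 2 * h x := rfl
    nlinarith
  have hTlow : T 0 ≤ T (x + -(2/ε) * h x) := hTanti harg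
  have hratio : T 0 / T x ≤ T (x + -(2/ε) * h x) / T x :=
    (div_le_div_iff_of_pos_right (hT0 x)).mpr hTlow
  have hE : Real.exp (2/ε) + 1 < T 0 / T x := by
    rw [lt_div_iff₀ (hT0 x)]
    rw [lt_div_iff₀ (by positivity : (0:ℝ) < Real.exp (2/ε) + 1)] at hx2
    linarith
  linarith
end Gmda


section Gmda
variable {T h : ℝ → ℝ}
variable (hT0 : ∀ x, 0 < T x) (hTanti : Antitone T) (hTtend : Tendsto T atTop (𝓝 0))
  (hh : ∀ x, 0 < h x)
  (hG : ∀ y : ℝ, Tendsto (fun x => T (x + y * h x) / T x) atTop (𝓝 (Real.exp (-y))))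

theorem sub_mul_h_tendsto (hsm : ∀ ε : ℝ, 0 < ε → ∀ᶠ x in atTop, h x < ε * x)
    (C : ℝ) (hC : 0 ≤ C) :
    Tendsto (fun z => z - C * h z) atTop atTop := by
  apply tendsto_atTop_mono' _ (_ : ∀ᶠ z in atTop, z / 2 ≤ z - C * h z)
  · exact (tendsto_id.atTop_div_const two_pos)
  · filter_upwards [hsm (1/(2*(C+1))) (by positivity), eventually_ge_atTop 0] with z h1 h2
    have : C * h z ≤ z / 2 := by
      have h3 := mul_le_mul_of_nonneg_left h1.le hC
      have hCC : C * (1/(2*(C+1)) * z) ≤ z/2 := by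
        rw [div_mul_eq_mul_div, mul_div_assoc', div_le_div_iff₀ (by positivity) two_pos]
        nlinarith
      linarith
    linarith

include hT0 hTanti hTtend hh hG in
theorem h_ratio_bound (hsm : ∀ ε : ℝ, 0 < ε → ∀ᶠ x in atTop, h x < ε * x)
    (C : ℝ) (hC : 0 < C) :
    ∃ K : ℝ, 1 ≤ K ∧ ∀ᶠ z in atTop, h (z - C * h z) ≤ K * h z := by
  by_contra hcon
  push_neg at hcon
  have hfreq : ∀ k : ℕ, ∃ z : ℝ, (k : ℝ) ≤ z ∧ (k : ℝ) * h z < h (z - C * h z) := by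
    intro k
    have h1 := hcon ((k:ℝ) + 1) (le_add_of_nonneg_left (Nat.cast_nonneg k))
    obtain ⟨z, hz1, hz2⟩ := (h1.and_eventually (eventually_ge_atTop (k:ℝ))).exists
    exact ⟨z, hz2, by nlinarith [(hh z)]⟩
  choose z hz1 hz2 using hfreq
  have ztend : Tendsto z atTop atTop :=
    tendsto_atTop_mono hz1 tendsto_natCast_atTop_atTop
  set u : ℕ → ℝ := fun k => z k - C * h (z k) with hu
  have utend : Tendsto u atTop atTop :=
    (sub_mul_h_tendsto hsm C hC.le).comp ztend
  have r1 : Tendsto (fun k => T (u k + (C/2) * h (u k)) / T (u k)) atTop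
      (𝓝 (Real.exp (-(C/2)))) := (hG (C/2)).comp utend
  have r2 : Tendsto (fun k => T (u k) / T (z k)) atTop (𝓝 (Real.exp C)) := by
    have := (hG (-C)).comp ztend
    simpa [Function.comp_def, hu, sub_eq_add_neg, neg_mul] using this
  have r3 : Tendsto (fun k => T (z k) / T (u k)) atTop (𝓝 (Real.exp (-C))) := by
    have := r2.inv₀ (Real.exp_ne_zero C)
    simp only [← Real.exp_neg] at this
    convert this using 2 with k
    rw [inv_div]
  have hle : ∀ᶠ k : ℕ in atTop, T (u k + (C/2) * h (u k)) / T (u k) ≤ T (z k) / T (u k) := by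
    filter_upwards [eventually_ge_atTop 2] with k hk
    have hk2 : (2:ℝ) ≤ (k:ℝ) := by exact_mod_cast hk
    have harg : z k ≤ u k + (C/2) * h (u k) := by
      have h1 : (k:ℝ) * h (z k) ≤ h (u k) := (hz2 k).le
      have h2 : (C/2) * ((k:ℝ) * h (z k)) ≤ (C/2) * h (u k) :=
        mul_le_mul_of_nonneg_left h1 (by positivity)
      have h3 : C * h (z k) ≤ (C/2) * ((k:ℝ) * h (z k)) := by
        nlinarith [mul_nonneg (mul_nonneg (by linarith : (0:ℝ) ≤ C/2)
          (by linarith : (0:ℝ) ≤ (k:ℝ)-2)) (hh (z k)).le]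
      simp only [hu]
      linarith
    exact (div_le_div_iff_of_pos_right (hT0 (u k))).mpr (hTanti harg)
  have := le_of_tendsto_of_tendsto r1 r3 hle
  have := Real.exp_le_exp.mp this
  linarith
end Gmda


theorem bonferroni {Ω : Type*} [MeasurableSpace Ω] (μ : Measure Ω) {ι : Type*} [DecidableEq ι]
    (A : ι → Set Ω) (hA : ∀ i, MeasurableSet (A i)) (s : Finset ι) :
    ∑ i ∈ s, μ (A i) ≤ μ (⋃ i ∈ s, A i) + ∑ i ∈ s, ∑ j ∈ s.erase i, μ (A i ∩ A j) := by
  classical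
  induction s using Finset.induction_on with
  | empty => simp
  | @insert a s ha ih =>
    rw [Finset.sum_insert ha]
    have hU : MeasurableSet (⋃ i ∈ s, A i) := by
      exact MeasurableSet.biUnion s.countable_toSet (fun i _ => hA i)
    have key : μ (A a) + μ (⋃ i ∈ s, A i) =
        μ (A a ∪ ⋃ i ∈ s, A i) + μ (A a ∩ ⋃ i ∈ s, A i) :=
      (measure_union_add_inter (A a) hU).symm
    have hcap : μ (A a ∩ ⋃ i ∈ s, A i) ≤ ∑ j ∈ s, μ (A a ∩ A j) := by
      rw [Set.inter_iUnion₂]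
      exact measure_biUnion_finset_le s _
    have hUnion : μ (A a ∪ ⋃ i ∈ s, A i) = μ (⋃ i ∈ insert a s, A i) := by
      rw [Finset.set_biUnion_insert]
    have hpairs : ∑ j ∈ s, μ (A a ∩ A j) + ∑ i ∈ s, ∑ j ∈ s.erase i, μ (A i ∩ A j) ≤
        ∑ i ∈ insert a s, ∑ j ∈ (insert a s).erase i, μ (A i ∩ A j) := by
      rw [Finset.sum_insert ha, Finset.erase_insert ha]
      refine add_le_add le_rfl (Finset.sum_le_sum fun i hi => ?_)
      refine Finset.sum_le_sum_of_subset ?_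
      intro j hj
      rw [Finset.mem_erase] at hj ⊢
      exact ⟨hj.1, Finset.mem_insert_of_mem hj.2⟩
    calc μ (A a) + ∑ i ∈ s, μ (A i)
        ≤ μ (A a) + (μ (⋃ i ∈ s, A i) + ∑ i ∈ s, ∑ j ∈ s.erase i, μ (A i ∩ A j)) := by
          exact add_le_add_right ih _
      _ = (μ (A a) + μ (⋃ i ∈ s, A i)) + ∑ i ∈ s, ∑ j ∈ s.erase i, μ (A i ∩ A j) := by ring
      _ = (μ (⋃ i ∈ insert a s, A i) + μ (A a ∩ ⋃ i ∈ s, A i)) + ∑ i ∈ s, ∑ j ∈ s.erase i, μ (A i ∩ A j) := by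
          rw [key, hUnion]
      _ ≤ μ (⋃ i ∈ insert a s, A i) + (∑ j ∈ s, μ (A a ∩ A j) + ∑ i ∈ s, ∑ j ∈ s.erase i, μ (A i ∩ A j)) := by
          rw [add_assoc]
          exact add_le_add_right (add_le_add_left hcap _) _
      _ ≤ _ := add_le_add_right hpairs _


noncomputable section

section Basics
variable {Ω : Type*} [MeasurableSpace Ω] (μ : Measure Ω) [IsProbabilityMeasure μ]

theorem tailP_nonneg (Y : Ω → ℝ) (x : ℝ) : 0 ≤ tailP μ Y x := ENNReal.toReal_nonneg

theorem treal_mono {A B : Set Ω} (h : A ⊆ B) : (μ A).toReal ≤ (μ B).toReal :=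
  ENNReal.toReal_mono (measure_ne_top μ B) (measure_mono h)

theorem treal_union_le (A B : Set Ω) :
    (μ (A ∪ B)).toReal ≤ (μ A).toReal + (μ B).toReal := by
  refine le_trans (ENNReal.toReal_mono ?_ (measure_union_le A B)) ?_
  · exact ENNReal.add_ne_top.mpr ⟨measure_ne_top μ A, measure_ne_top μ B⟩
  · rw [ENNReal.toReal_add (measure_ne_top μ A) (measure_ne_top μ B)]

theorem treal_biUnion_le {ι : Type*} (s : Finset ι) (A : ι → Set Ω) :
    (μ (⋃ i ∈ s, A i)).toReal ≤ ∑ i ∈ s, (μ (A i)).toReal := by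
  refine le_trans (ENNReal.toReal_mono ?_ (measure_biUnion_finset_le s A)) ?_
  · exact (ENNReal.sum_lt_top.mpr fun i _ => measure_lt_top μ (A i)).ne
  · rw [ENNReal.toReal_sum (fun i _ => measure_ne_top μ (A i))]

theorem tailP_anti (Y : Ω → ℝ) : Antitone (tailP μ Y) := fun x y hxy =>
  treal_mono μ (fun ω (h : y < Y ω) => lt_of_le_of_lt hxy h)

theorem tailP_scale (Y : Ω → ℝ) (c x : ℝ) (hc : 0 < c) :
    tailP μ (fun ω => c * Y ω) x = tailP μ Y (x / c) := by
  have hset : {ω | x < c * Y ω} = {ω | x / c < Y ω} := by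
    ext ω
    simp only [Set.mem_setOf_eq]
    rw [div_lt_iff₀' hc]
  rw [tailP, tailP, hset]

variable {n : ℕ} [NeZero n] (X : Fin n → Ω → ℝ)

theorem maxRV_lt_iff (x : ℝ) (ω : Ω) : x < maxRV X ω ↔ ∃ i, x < X i ω := by
  have : Nonempty (Fin n) := ⟨⟨0, Nat.pos_of_ne_zero (NeZero.ne n)⟩⟩
  exact lt_ciSup_iff (Set.Finite.bddAbove (Set.finite_range _))

theorem maxRV_set_eq (x : ℝ) : {ω | x < maxRV X ω} = ⋃ i, {ω | x < X i ω} := by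
  ext ω; simp [maxRV_lt_iff, Set.mem_iUnion]

theorem tailP_max_tendsto (hXm : ∀ i, Measurable (X i)) :
    Tendsto (tailP μ (maxRV X)) atTop (𝓝 0) := by
  have : Nonempty (Fin n) := ⟨⟨0, Nat.pos_of_ne_zero (NeZero.ne n)⟩⟩
  have hmeas : ∀ x : ℝ, MeasurableSet {ω | x < maxRV X ω} := by
    intro x
    rw [maxRV_set_eq]
    exact MeasurableSet.iUnion fun i => measurableSet_lt measurable_const (hXm i)
  have hnat : Tendsto (fun k : ℕ => μ {ω | (k : ℝ) < maxRV X ω}) atTop (𝓝 (μ (⋂ k : ℕ, {ω | (k:ℝ) < maxRV X ω}))) := by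
    have := tendsto_measure_iInter_atTop (μ := μ)
      (s := fun k : ℕ => {ω | (k:ℝ) < maxRV X ω})
      (fun k => (hmeas k).nullMeasurableSet)
      (fun i j hij ω (h : (j:ℝ) < maxRV X ω) =>
        lt_of_le_of_lt (by exact_mod_cast hij : (i:ℝ) ≤ (j:ℝ)) h)
      ⟨0, measure_ne_top μ _⟩
    exact this
  have hempty : (⋂ k : ℕ, {ω | (k:ℝ) < maxRV X ω}) = ∅ := by
    ext ω
    simp only [Set.mem_iInter, Set.mem_setOf_eq, Set.mem_empty_iff_false, iff_false, not_forall,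
      not_lt]
    obtain ⟨k, hk⟩ := exists_nat_gt (maxRV X ω)
    exact ⟨k, hk.le⟩
  rw [hempty] at hnat
  simp only [measure_empty] at hnat
  have hnatR : Tendsto (fun k : ℕ => tailP μ (maxRV X) k) atTop (𝓝 0) := by
    have := (ENNReal.tendsto_toReal (by simp)).comp hnat
    simpa [tailP, Function.comp_def] using this
  -- extend to real x → ∞
  apply tendsto_of_tendsto_of_tendsto_of_le_of_le' (g := fun _ => (0:ℝ))
      (h := fun x : ℝ => tailP μ (maxRV X) (⌊x⌋₊ : ℝ)) tendsto_const_nhds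
      (hnatR.comp tendsto_nat_floor_atTop)
  · exact Eventually.of_forall fun x => tailP_nonneg μ _ x
  · filter_upwards [eventually_ge_atTop (0:ℝ)] with x hx
    exact tailP_anti μ (maxRV X) (Nat.floor_le hx)

end Basics

theorem endFilter_eq_atTop {T : ℝ → ℝ} (hT0 : ∀ x, 0 < T x) : endFilter T = atTop := by
  rw [endFilter, if_pos]
  rw [upEnd]
  have : {x | 0 < T x} = Set.univ := Set.eq_univ_of_forall hT0
  rw [this, Set.image_univ]
  rw [sSup_eq_top]
  intro b hb
  induction b using EReal.rec with
  | bot => exact ⟨0, Set.mem_range_self 0, by exact_mod_cast EReal.bot_lt_coe 0⟩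
  | coe r =>
    refine ⟨r + 1, ⟨r + 1, rfl⟩, ?_⟩
    exact_mod_cast lt_add_one r
  | top => exact absurd rfl hb.ne
end

section Inc
variable {n : ℕ} [NeZero n]

theorem npos : 0 < n := Nat.pos_of_ne_zero (NeZero.ne n)

theorem sum_erase_le {g : Fin n → ℝ} {B : ℝ} (hB : 0 ≤ B)
    (hbd : ∀ i ∈ Finset.univ.erase (0 : Fin n), g i ≤ B) :
    ∑ i ∈ Finset.univ.erase (0:Fin n), g i ≤ (n:ℝ) * B := by
  have hcard : ((Finset.univ.erase (0 : Fin n)).card : ℝ) ≤ (n : ℝ) := by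
    have h1 := Finset.card_erase_le (a := (0:Fin n)) (s := Finset.univ)
    have h2 : (Finset.univ : Finset (Fin n)).card = n := by simp
    exact_mod_cast le_trans h1 (le_of_eq h2)
  calc ∑ i ∈ Finset.univ.erase (0:Fin n), g i
      ≤ ∑ _i ∈ Finset.univ.erase (0:Fin n), B := Finset.sum_le_sum hbd
    _ = ((Finset.univ.erase (0:Fin n)).card : ℝ) * B := by
        rw [Finset.sum_const, nsmul_eq_mul]
    _ ≤ (n:ℝ) * B := mul_le_mul_of_nonneg_right hcard hB

theorem sum_erase_ge {g : Fin n → ℝ} {B : ℝ} (hB : 0 ≤ B)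
    (hbd : ∀ i ∈ Finset.univ.erase (0 : Fin n), -B ≤ g i) :
    -((n:ℝ) * B) ≤ ∑ i ∈ Finset.univ.erase (0:Fin n), g i := by
  have := sum_erase_le (g := fun i => -(g i)) hB (by
    intro i hi; simpa using neg_le_neg (hbd i hi))
  rw [Finset.sum_neg_distrib] at this
  linarith

theorem ndt_le {a d δ : ℝ} (ha : 0 < a) (hd : 0 ≤ d) (hδ : 0 < δ) :
    0 < a*δ/((n:ℝ)*d+1) ∧ (n:ℝ)*d*(a*δ/((n:ℝ)*d+1)) ≤ a*δ := by
  have hN : (0:ℝ) ≤ (n:ℝ)*d := by positivity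
  constructor
  · positivity
  · rw [mul_div_assoc']
    rw [div_le_iff₀ (by positivity)]
    nlinarith

theorem fin_val_one_le {i : Fin n} (h : i ≠ 0) : 1 ≤ (i : ℕ) := by
  rcases Nat.eq_zero_or_pos (i : ℕ) with h' | h'
  · exact absurd (Fin.ext h' : i = 0) h
  · exact h'

theorem inc_upper (f : Fin n → ℝ) (c : Fin n → ℝ) (a d L δ r z : ℝ)
    (ha : 0 < a) (hd : 0 ≤ d) (hL : 0 < L) (hδ : 0 < δ) (hr : 0 < r)
    (hca : a ≤ c 0) (hcd : ∀ i : Fin n, i ≠ 0 → 0 ≤ c i ∧ c i ≤ d)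
    (hsum : c 0 * z < ∑ i, c i * (sortD f).getD i 0) :
    (z - δ * r < ⨆ j, f j) ∨
    (∃ u v : Fin n, u ≠ v ∧ L * r < f u ∧ L * r < f v) ∨
    (∃ u v : Fin n, u ≠ v ∧ (a*δ/((n:ℝ)*d+1)) * r < |f u| ∧ z - ((n:ℝ)*d*L/a) * r < f v) := by
  classical
  obtain ⟨ht, hNt⟩ := ndt_le (n := n) ha hd hδ
  set t : ℝ := a*δ/((n:ℝ)*d+1) with hT
  set C : ℝ := (n:ℝ)*d*L/a with hCdef
  have hc0 : 0 < c 0 := lt_of_lt_of_le ha hca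
  have hCa : C * a = (n:ℝ)*d*L := by rw [hCdef]; field_simp
  have hC0 : 0 ≤ C := by rw [hCdef]; positivity
  have hv0 : ((0 : Fin n) : ℕ) = 0 := by simp
  have hg0max : (sortD f).getD 0 0 = ⨆ j, f j := sortD_zero_eq_max f
  have hsplit : ∑ i, c i * (sortD f).getD i 0
      = c 0 * (sortD f).getD 0 0
        + ∑ i ∈ Finset.univ.erase 0, c i * (sortD f).getD i 0 := by
    rw [← hv0]
    exact (Finset.add_sum_erase _ (fun i : Fin n => c i * (sortD f).getD i 0)
      (Finset.mem_univ 0)).symm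
  rw [hsplit] at hsum
  set G0 := (sortD f).getD (0:ℕ) 0 with hG0
  by_cases hcase : ∀ i ∈ Finset.univ.erase (0 : Fin n), |(sortD f).getD (i:ℕ) 0| ≤ t * r
  · left
    have hrestU : ∑ i ∈ Finset.univ.erase 0, c i * (sortD f).getD (i:ℕ) 0
        ≤ (n:ℝ) * (d * (t*r)) := by
      apply sum_erase_le (by positivity)
      intro i hi
      obtain ⟨h0, h1⟩ := hcd i (Finset.mem_erase.mp hi).1
      have habs : |c i * (sortD f).getD (i:ℕ) 0| ≤ d * (t*r) := by
        rw [abs_mul, abs_of_nonneg h0]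
        exact mul_le_mul h1 (hcase i hi) (abs_nonneg _) hd
      linarith [le_abs_self (c i * (sortD f).getD (i:ℕ) 0)]
    -- c 0 * G0 > c 0 * z - n d t r ≥ c 0 * z - a δ r ⇒ G0 > z - δ r
    have hkey : c 0 * z - a * δ * r < c 0 * G0 := by
      have e2 : (n:ℝ) * (d * (t*r)) ≤ a*δ*r := by
        have := mul_le_mul_of_nonneg_right hNt hr.le
        nlinarith
      linarith
    rw [← hg0max]
    by_contra hcon
    push_neg at hcon
    have e3 : c 0 * G0 ≤ c 0 * (z - δ*r) := mul_le_mul_of_nonneg_left hcon hc0.le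
    have e4 : a * (δ*r) ≤ c 0 * (δ*r) := mul_le_mul_of_nonneg_right hca (by positivity)
    nlinarith
  · push_neg at hcase
    obtain ⟨i0, hi0mem, hi0⟩ := hcase
    have hi0ne : i0 ≠ 0 := (Finset.mem_erase.mp hi0mem).1
    have hi0val : 1 ≤ (i0 : ℕ) := fin_val_one_le hi0ne
    have hn2 : 1 < n := lt_of_le_of_lt hi0val i0.isLt
    by_cases hb1 : L * r < (sortD f).getD 1 0
    · right; left
      refine sortD_pair_indices f (p1 := fun w => L * r < w) (p2 := fun w => L * r < w)
        (i1 := 1) (i2 := 0) (by omega) hn2 npos hb1 ?_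
      calc L * r < (sortD f).getD 1 0 := hb1
        _ ≤ (sortD f).getD 0 0 := sortD_anti f (by omega) hn2
    · right; right
      push_neg at hb1
      have hrestU : ∑ i ∈ Finset.univ.erase 0, c i * (sortD f).getD (i:ℕ) 0
          ≤ (n:ℝ) * (d * (L*r)) := by
        apply sum_erase_le (by positivity)
        intro i hi
        obtain ⟨h0, h1⟩ := hcd i (Finset.mem_erase.mp hi).1
        have hgle : (sortD f).getD (i:ℕ) 0 ≤ L * r :=
          le_trans (sortD_anti f (fin_val_one_le (Finset.mem_erase.mp hi).1) i.isLt) hb1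
        have hdLr : (0:ℝ) ≤ d * (L*r) := by positivity
        rcases le_or_gt 0 ((sortD f).getD (i:ℕ) 0) with hgpos | hgneg
        · calc c i * (sortD f).getD (i:ℕ) 0 ≤ d * (sortD f).getD (i:ℕ) 0 :=
              mul_le_mul_of_nonneg_right h1 hgpos
            _ ≤ d * (L*r) := mul_le_mul_of_nonneg_left hgle hd
        · nlinarith
      have hkey : z - C * r < G0 := by
        by_contra hcon
        push_neg at hcon
        have e3 : c 0 * G0 ≤ c 0 * (z - C*r) := mul_le_mul_of_nonneg_left hcon hc0.le
        have e5 : (n:ℝ) * (d * (L*r)) = C * a * r := by rw [hCa]; ring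
        have e4 : a * (C*r) ≤ c 0 * (C*r) :=
          mul_le_mul_of_nonneg_right hca (by positivity)
        nlinarith
      exact sortD_pair_indices f (p1 := fun w => t * r < |w|) (p2 := fun w => z - C * r < w)
        (i1 := (i0:ℕ)) (i2 := 0) (by omega) i0.isLt npos hi0 hkey

theorem inc_lower (f : Fin n → ℝ) (c : Fin n → ℝ) (a d δ r z : ℝ)
    (ha : 0 < a) (hd : 0 ≤ d) (hδ : 0 < δ) (hr : 0 < r)
    (hca : a ≤ c 0) (hcd : ∀ i : Fin n, i ≠ 0 → 0 ≤ c i ∧ c i ≤ d)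
    (hmax : z + δ * r < ⨆ j, f j) :
    (c 0 * z < ∑ i, c i * (sortD f).getD i 0) ∨
    (∃ u v : Fin n, u ≠ v ∧ (a*δ/((n:ℝ)*d+1)) * r < |f u| ∧ z < f v) := by
  classical
  obtain ⟨ht, hNt⟩ := ndt_le (n := n) ha hd hδ
  set t : ℝ := a*δ/((n:ℝ)*d+1) with hT
  have hc0 : 0 < c 0 := lt_of_lt_of_le ha hca
  have hv0 : ((0 : Fin n) : ℕ) = 0 := by simp
  have hg0max : (sortD f).getD 0 0 = ⨆ j, f j := sortD_zero_eq_max f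
  by_cases hcase : ∀ i ∈ Finset.univ.erase (0 : Fin n), |(sortD f).getD (i:ℕ) 0| ≤ t * r
  · left
    have hsplit : ∑ i, c i * (sortD f).getD i 0
        = c 0 * (sortD f).getD 0 0
          + ∑ i ∈ Finset.univ.erase 0, c i * (sortD f).getD i 0 := by
      rw [← hv0]
      exact (Finset.add_sum_erase _ (fun i : Fin n => c i * (sortD f).getD i 0)
        (Finset.mem_univ 0)).symm
    rw [hsplit]
    have hrestL : -((n:ℝ) * (d * (t*r))) ≤
        ∑ i ∈ Finset.univ.erase 0, c i * (sortD f).getD (i:ℕ) 0 := by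
      apply sum_erase_ge (by positivity)
      intro i hi
      obtain ⟨h0, h1⟩ := hcd i (Finset.mem_erase.mp hi).1
      have habs : |c i * (sortD f).getD (i:ℕ) 0| ≤ d * (t*r) := by
        rw [abs_mul, abs_of_nonneg h0]
        exact mul_le_mul h1 (hcase i hi) (abs_nonneg _) hd
      linarith [neg_abs_le (c i * (sortD f).getD (i:ℕ) 0)]
    have hgmax : z + δ * r < (sortD f).getD 0 0 := by rw [hg0max]; exact hmax
    have e1 : c 0 * (z + δ*r) ≤ c 0 * (sortD f).getD 0 0 :=
      mul_le_mul_of_nonneg_left hgmax.le hc0.le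
    have e2 : (n:ℝ) * (d * (t*r)) ≤ a*δ*r := by
      have := mul_le_mul_of_nonneg_right hNt hr.le
      nlinarith
    have e4 : a * (δ*r) ≤ c 0 * (δ*r) := mul_le_mul_of_nonneg_right hca (by positivity)
    nlinarith
  · push_neg at hcase
    obtain ⟨i0, hi0mem, hi0⟩ := hcase
    have hi0ne : i0 ≠ 0 := (Finset.mem_erase.mp hi0mem).1
    have hi0val : 1 ≤ (i0 : ℕ) := fin_val_one_le hi0ne
    right
    have hgmax : z < (sortD f).getD 0 0 := by
      rw [hg0max]; nlinarith
    exact sortD_pair_indices f (p1 := fun w => t * r < |w|) (p2 := fun w => z < w)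
      (i1 := (i0:ℕ)) (i2 := 0) (by omega) i0.isLt npos hi0 hgmax
end Inc

section OTerms
open MeasureTheory Filter Topology
variable {Ω : Type*} [MeasurableSpace Ω] (μ : Measure Ω) [IsProbabilityMeasure μ]
  {n : ℕ} [NeZero n] (X : Fin n → Ω → ℝ) (h : ℝ → ℝ)

theorem pE_term_tendsto
    (hh : ∀ x, 0 < h x)
    (hT0 : ∀ x, 0 < tailP μ (maxRV X) x)
    (hTanti : Antitone (tailP μ (maxRV X)))
    (hTtend : Tendsto (tailP μ (maxRV X)) atTop (𝓝 0))
    (hG : ∀ y : ℝ, Tendsto (fun x => tailP μ (maxRV X) (x + y * h x) / tailP μ (maxRV X) x)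
      atTop (𝓝 (Real.exp (-y))))
    (hDS1 : ∀ t : ℝ, 0 < t → ∀ i j : Fin n, i ≠ j →
      Tendsto (fun x => (μ {ω | t * h x < |X i ω| ∧ x < X j ω}).toReal /
        tailP μ (maxRV X) x) atTop (𝓝 0))
    (t C : ℝ) (ht : 0 < t) (hC : 0 ≤ C) (i j : Fin n) (hij : i ≠ j) :
    Tendsto (fun z => (μ {ω | t * h z < |X i ω| ∧ z - C * h z < X j ω}).toReal /
      tailP μ (maxRV X) z) atTop (𝓝 0) := by
  set T := tailP μ (maxRV X) with hTdef
  have hsm : ∀ ε : ℝ, 0 < ε → ∀ᶠ x in atTop, h x < ε * x :=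
    fun ε hε => h_small hT0 hTanti hTtend hh hG ε hε
  have hKex : ∃ K : ℝ, 1 ≤ K ∧ ∀ᶠ z in atTop, h (z - C * h z) ≤ K * h z := by
    rcases eq_or_lt_of_le hC with rfl | hC'
    · exact ⟨1, le_refl 1, Eventually.of_forall fun z => by simp⟩
    · exact h_ratio_bound hT0 hTanti hTtend hh hG hsm C hC'
  obtain ⟨K, hK1, hKev⟩ := hKex
  have hK0 : 0 < K := lt_of_lt_of_le one_pos hK1
  have ht' : 0 < t / K := div_pos ht hK0
  have hG1 := hDS1 (t/K) ht' i j hij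
  have utend : Tendsto (fun z => z - C * h z) atTop atTop :=
    sub_mul_h_tendsto hsm C hC
  have hcomp : Tendsto (fun z =>
      (μ {ω | (t/K) * h (z - C * h z) < |X i ω| ∧ (z - C * h z) < X j ω}).toReal /
        T (z - C * h z)) atTop (𝓝 0) := hG1.comp utend
  have hTfrac : Tendsto (fun z => T (z - C * h z) / T z) atTop (𝓝 (Real.exp C)) := by
    have := hG (-C)
    rw [neg_neg] at this
    simpa [sub_eq_add_neg, neg_mul] using this
  have prod := hcomp.mul hTfrac
  rw [zero_mul] at prod
  apply squeeze_zero' (g := fun z =>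
    ((μ {ω | (t/K) * h (z - C * h z) < |X i ω| ∧ (z - C * h z) < X j ω}).toReal /
        T (z - C * h z)) * (T (z - C * h z) / T z))
  · exact Eventually.of_forall fun z => div_nonneg ENNReal.toReal_nonneg (hT0 z).le
  · filter_upwards [hKev] with z hKz
    have hincl : {ω | t * h z < |X i ω| ∧ z - C * h z < X j ω} ⊆
        {ω | (t/K) * h (z - C * h z) < |X i ω| ∧ (z - C * h z) < X j ω} := by
      intro ω ⟨h1, h2⟩
      refine ⟨lt_of_le_of_lt ?_ h1, h2⟩
      calc (t/K) * h (z - C * h z) ≤ (t/K) * (K * h z) :=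
            mul_le_mul_of_nonneg_left hKz ht'.le
        _ = t * h z := by
            rw [← mul_assoc, div_mul_cancel₀ t hK0.ne']
    have hnum : (μ {ω | t * h z < |X i ω| ∧ z - C * h z < X j ω}).toReal ≤
        (μ {ω | (t/K) * h (z - C * h z) < |X i ω| ∧ (z - C * h z) < X j ω}).toReal :=
      treal_mono μ hincl
    have hTu : T (z - C * h z) ≠ 0 := (hT0 _).ne'
    have heq : (μ {ω | (t/K) * h (z - C * h z) < |X i ω| ∧ (z - C * h z) < X j ω}).toReal /
        T (z - C * h z) * (T (z - C * h z) / T z) =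
        (μ {ω | (t/K) * h (z - C * h z) < |X i ω| ∧ (z - C * h z) < X j ω}).toReal / T z := by
      field_simp
    rw [heq]
    exact (div_le_div_iff_of_pos_right (hT0 z)).mpr hnum
  · exact prod

theorem comp2_tendsto (hXm : ∀ i, Measurable (X i))
    (hh : ∀ x, 0 < h x)
    (hT0 : ∀ x, 0 < tailP μ (maxRV X) x)
    (hTanti : Antitone (tailP μ (maxRV X)))
    (hTtend : Tendsto (tailP μ (maxRV X)) atTop (𝓝 0))
    (hG : ∀ y : ℝ, Tendsto (fun x => tailP μ (maxRV X) (x + y * h x) / tailP μ (maxRV X) x)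
      atTop (𝓝 (Real.exp (-y))))
    (hDS1 : ∀ t : ℝ, 0 < t → ∀ i j : Fin n, i ≠ j →
      Tendsto (fun x => (μ {ω | t * h x < |X i ω| ∧ x < X j ω}).toReal /
        tailP μ (maxRV X) x) atTop (𝓝 0)) :
    Tendsto (fun u => tailP μ (maxRV X) u / ∑ i, tailP μ (X i) u) atTop (𝓝 1) := by
  classical
  set T := tailP μ (maxRV X) with hTdef
  set S : ℝ → ℝ := fun u => ∑ i, tailP μ (X i) u with hSdef
  have hAm : ∀ (u : ℝ) (i : Fin n), MeasurableSet {ω | u < X i ω} := by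
    intro u i
    exact (hXm i) measurableSet_Ioi
  have hTS : ∀ u, T u ≤ S u := by
    intro u
    rw [hTdef]
    unfold tailP
    rw [maxRV_set_eq X u]
    have : (⋃ i, {ω | u < X i ω}) = ⋃ i ∈ Finset.univ, {ω | u < X i ω} := by simp
    rw [this]
    exact treal_biUnion_le μ Finset.univ _
  set pP : ℝ → ℝ := fun u => ∑ i, ∑ j ∈ Finset.univ.erase i,
    (μ ({ω | u < X i ω} ∩ {ω | u < X j ω})).toReal with hpPdef
  have hST : ∀ u, S u ≤ T u + pP u := by
    intro u
    have hb := bonferroni μ (fun i => {ω | u < X i ω}) (hAm u) Finset.univ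
    have hne : (μ (⋃ i ∈ Finset.univ, {ω | u < X i ω}) + ∑ i, ∑ j ∈ Finset.univ.erase i,
        μ ({ω | u < X i ω} ∩ {ω | u < X j ω})) ≠ ⊤ := by
      apply ENNReal.add_ne_top.mpr
      constructor
      · exact measure_ne_top μ _
      · exact (ENNReal.sum_lt_top.mpr fun i _ =>
          ENNReal.sum_lt_top.mpr fun j _ => measure_lt_top μ _).ne
    have h2 := ENNReal.toReal_mono hne hb
    rw [ENNReal.toReal_sum (fun i _ => measure_ne_top μ _)] at h2
    rw [ENNReal.toReal_add (measure_ne_top μ _) ((ENNReal.sum_lt_top.mpr fun i _ =>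
          ENNReal.sum_lt_top.mpr fun j _ => measure_lt_top μ _).ne)] at h2
    rw [ENNReal.toReal_sum (fun i _ => (ENNReal.sum_lt_top.mpr fun j _ =>
          measure_lt_top μ _).ne)] at h2
    have h3 : ∀ i : Fin n, (∑ j ∈ Finset.univ.erase i,
        μ ({ω | u < X i ω} ∩ {ω | u < X j ω})).toReal = ∑ j ∈ Finset.univ.erase i,
        (μ ({ω | u < X i ω} ∩ {ω | u < X j ω})).toReal :=
      fun i => ENNReal.toReal_sum (fun j _ => measure_ne_top μ _)
    simp only [h3] at h2
    have hset : (⋃ i ∈ Finset.univ, {ω | u < X i ω}) = {ω | u < maxRV X ω} := by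
      rw [maxRV_set_eq X u]; simp
    rw [hset] at h2
    exact h2
  have hpP : Tendsto (fun u => pP u / T u) atTop (𝓝 0) := by
    have : (fun u => pP u / T u) = fun u => ∑ i, ∑ j ∈ Finset.univ.erase i,
        ((μ ({ω | u < X i ω} ∩ {ω | u < X j ω})).toReal / T u) := by
      funext u
      rw [hpPdef]
      rw [Finset.sum_div]
      congr 1
      funext i
      rw [Finset.sum_div]
    rw [this]
    have hzero : (0:ℝ) = ∑ _i : Fin n, ∑ _j ∈ Finset.univ.erase _i, (0:ℝ) := by simp
    rw [hzero]
    apply tendsto_finset_sum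
    intro i _
    apply tendsto_finset_sum
    intro j hj
    have hij : i ≠ j := fun hentry => (Finset.mem_erase.mp hj).1 hentry.symm
    apply squeeze_zero' (g := fun u =>
      (μ {ω | 1 * h u < |X i ω| ∧ u < X j ω}).toReal / T u)
    · exact Eventually.of_forall fun u => div_nonneg ENNReal.toReal_nonneg (hT0 u).le
    · filter_upwards [h_small hT0 hTanti hTtend hh hG 1 one_pos] with u hu
      have hincl : {ω | u < X i ω} ∩ {ω | u < X j ω} ⊆
          {ω | 1 * h u < |X i ω| ∧ u < X j ω} := by
        intro ω ⟨h1, h2⟩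
        refine ⟨?_, h2⟩
        rw [one_mul]
        rw [one_mul] at hu
        calc h u < u := hu
          _ < X i ω := h1
          _ ≤ |X i ω| := le_abs_self _
      exact (div_le_div_iff_of_pos_right (hT0 u)).mpr (treal_mono μ hincl)
    · exact hDS1 1 one_pos i j hij
  have hST1 : Tendsto (fun u => S u / T u) atTop (𝓝 1) := by
    apply tendsto_of_tendsto_of_tendsto_of_le_of_le' tendsto_const_nhds
        (by simpa using tendsto_const_nhds.add hpP :
          Tendsto (fun u => 1 + pP u / T u) atTop (𝓝 1))
    · exact Eventually.of_forall fun u => (one_le_div (hT0 u)).mpr (hTS u)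
    · refine Eventually.of_forall fun u => ?_
      have heq : 1 + pP u / T u = (T u + pP u) / T u := by
        rw [add_div, div_self (hT0 u).ne']
      rw [heq]
      exact (div_le_div_iff_of_pos_right (hT0 u)).mpr (hST u)
  have hfin := hST1.inv₀ one_ne_zero
  rw [inv_one] at hfin
  have heq : (fun u => T u / S u) = fun u => (S u / T u)⁻¹ := by
    funext u
    rw [inv_div]
  rw [heq]
  exact hfin
end OTerms

section Comp1
open MeasureTheory Filter Topology
variable {Ω : Type*} [MeasurableSpace Ω] (μ : Measure Ω) [IsProbabilityMeasure μ]
  {n : ℕ} [NeZero n] (X : Fin n → Ω → ℝ) (h : ℝ → ℝ)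

theorem comp1_uniform
    (hh : ∀ x, 0 < h x)
    (hT0 : ∀ x, 0 < tailP μ (maxRV X) x)
    (hTanti : Antitone (tailP μ (maxRV X)))
    (hTtend : Tendsto (tailP μ (maxRV X)) atTop (𝓝 0))
    (hG : ∀ y : ℝ, Tendsto (fun x => tailP μ (maxRV X) (x + y * h x) / tailP μ (maxRV X) x)
      atTop (𝓝 (Real.exp (-y))))
    (hDS1 : ∀ t : ℝ, 0 < t → ∀ i j : Fin n, i ≠ j →
      Tendsto (fun x => (μ {ω | t * h x < |X i ω| ∧ x < X j ω}).toReal /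
        tailP μ (maxRV X) x) atTop (𝓝 0))
    (L : ℝ) (hL : 0 < L)
    (hDS2 : ∀ i j : Fin n, i < j →
      Tendsto (fun x => (μ {ω | L * h x < X i ω ∧ L * h x < X j ω}).toReal /
        tailP μ (maxRV X) x) atTop (𝓝 0))
    (a b d : ℝ) (ha : 0 < a) (hab : a ≤ b) (hd : 0 ≤ d) :
    TendstoUniformlyOn
      (fun x (c : Fin n → ℝ) =>
        tailP μ (fun ω => ∑ i, c i * ordDesc X i ω) x /
          tailP μ (fun ω => c 0 * maxRV X ω) x) 1 atTop
      {c : Fin n → ℝ | c 0 ∈ Set.Icc a b ∧ ∀ i : Fin n, i ≠ 0 → c i ∈ Set.Icc 0 d} := by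
  classical
  set T := tailP μ (maxRV X) with hTdef
  rw [Metric.tendstoUniformlyOn_iff]
  intro ε hε
  set δ : ℝ := Real.log (1 + ε/2) with hδdef
  have hδ : 0 < δ := Real.log_pos (by linarith)
  have hexpδ : Real.exp δ = 1 + ε/2 := Real.exp_log (by linarith)
  set t : ℝ := a*δ/((n:ℝ)*d+1) with htdef
  set C : ℝ := (n:ℝ)*d*L/a with hCdef
  have hNn : (0:ℝ) ≤ (n:ℝ)*d := by positivity
  have ht0 : 0 < t := by rw [htdef]; positivity
  have hC0 : 0 ≤ C := by rw [hCdef]; positivity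
  set pB : ℝ → ℝ := fun z => ∑ i, ∑ j ∈ Finset.univ.erase i,
    (μ {ω | L * h z < X i ω ∧ L * h z < X j ω}).toReal with hpBdef
  set pE : ℝ → ℝ := fun z => ∑ i, ∑ j ∈ Finset.univ.erase i,
    (μ {ω | t * h z < |X i ω| ∧ z - C * h z < X j ω}).toReal with hpEdef
  set pN : ℝ → ℝ := fun z => ∑ i, ∑ j ∈ Finset.univ.erase i,
    (μ {ω | t * h z < |X i ω| ∧ z < X j ω}).toReal with hpNdef
  -- limits
  have hTm : Tendsto (fun z => T (z - δ * h z) / T z) atTop (𝓝 (Real.exp δ)) := by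
    have := hG (-δ)
    rw [neg_neg] at this
    simpa [sub_eq_add_neg, neg_mul] using this
  have hTp : Tendsto (fun z => T (z + δ * h z) / T z) atTop (𝓝 (Real.exp (-δ))) := hG δ
  have hsum_div : ∀ (q : ℝ → Fin n → Fin n → ℝ),
      (∀ i j : Fin n, i ≠ j → Tendsto (fun z => q z i j / T z) atTop (𝓝 0)) →
      Tendsto (fun z => (∑ i, ∑ j ∈ Finset.univ.erase i, q z i j) / T z) atTop (𝓝 0) := by
    intro q hq
    have heq : (fun z => (∑ i, ∑ j ∈ Finset.univ.erase i, q z i j) / T z)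
        = fun z => ∑ i, ∑ j ∈ Finset.univ.erase i, (q z i j / T z) := by
      funext z
      rw [Finset.sum_div]
      congr 1
      funext i
      rw [Finset.sum_div]
    rw [heq]
    have hzero : (0:ℝ) = ∑ i : Fin n, ∑ j ∈ Finset.univ.erase i, (0:ℝ) := by simp
    rw [hzero]
    apply tendsto_finset_sum
    intro i _
    apply tendsto_finset_sum
    intro j hj
    exact hq i j (fun he => (Finset.mem_erase.mp hj).1 he.symm)
  have hpB : Tendsto (fun z => pB z / T z) atTop (𝓝 0) := by
    apply hsum_div
    intro i j hij
    rcases lt_or_gt_of_ne hij with hlt | hgt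
    · exact hDS2 i j hlt
    · have hset : ∀ z : ℝ, {ω | L * h z < X i ω ∧ L * h z < X j ω}
          = {ω | L * h z < X j ω ∧ L * h z < X i ω} := by
        intro z
        ext ω
        exact and_comm
      simp only [hset]
      exact hDS2 j i hgt
  have hpE : Tendsto (fun z => pE z / T z) atTop (𝓝 0) := by
    apply hsum_div
    intro i j hij
    exact pE_term_tendsto μ X h hh hT0 hTanti hTtend hG hDS1 t C ht0 hC0 i j hij
  have hpN : Tendsto (fun z => pN z / T z) atTop (𝓝 0) := by
    apply hsum_div
    intro i j hij
    exact hDS1 t ht0 i j hij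
  have hUp : Tendsto (fun z => (T (z - δ * h z) + pB z + pE z) / T z) atTop
      (𝓝 (Real.exp δ)) := by
    have heq : (fun z => (T (z - δ * h z) + pB z + pE z) / T z)
        = fun z => T (z - δ * h z) / T z + pB z / T z + pE z / T z := by
      funext z; rw [add_div, add_div]
    rw [heq]
    have := (hTm.add hpB).add hpE
    simpa using this
  have hLo : Tendsto (fun z => (T (z + δ * h z) - pN z) / T z) atTop
      (𝓝 (Real.exp (-δ))) := by
    have heq : (fun z => (T (z + δ * h z) - pN z) / T z)
        = fun z => T (z + δ * h z) / T z - pN z / T z := by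
      funext z; rw [sub_div]
    rw [heq]
    have := hTp.sub hpN
    simpa using this
  have hUpev : ∀ᶠ z in atTop, T (z - δ * h z) + pB z + pE z < (1 + 3*ε/4) * T z := by
    have hlim : Real.exp δ < 1 + 3*ε/4 := by rw [hexpδ]; linarith
    filter_upwards [hUp.eventually_lt_const hlim] with z hz
    exact (div_lt_iff₀ (hT0 z)).mp hz
  have hLoev : ∀ᶠ z in atTop, (1 - 3*ε/4) * T z < T (z + δ * h z) - pN z := by
    have hlim : 1 - 3*ε/4 < Real.exp (-δ) := by
      rw [Real.exp_neg, hexpδ, inv_eq_one_div]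
      rw [lt_div_iff₀ (by linarith : (0:ℝ) < 1 + ε/2)]
      nlinarith
    filter_upwards [hLo.eventually_const_lt hlim] with z hz
    exact (lt_div_iff₀ (hT0 z)).mp hz
  obtain ⟨Z, hZ⟩ := eventually_atTop.mp (hUpev.and hLoev)
  filter_upwards [eventually_ge_atTop (max (b*Z) 0), eventually_gt_atTop 0] with x hx1 hx2
  intro c hc
  obtain ⟨⟨hca, hcb⟩, hcd⟩ := hc
  have hc0 : 0 < c 0 := lt_of_lt_of_le ha hca
  set z : ℝ := x / c 0 with hzdef
  have hzZ : Z ≤ z := by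
    have h1 : Z ≤ x / b := by
      rw [le_div_iff₀ (lt_of_lt_of_le ha hab)]
      calc Z * b = b * Z := mul_comm _ _
        _ ≤ max (b*Z) 0 := le_max_left _ _
        _ ≤ x := hx1
    have h2 : x / b ≤ x / c 0 := by
      apply div_le_div_of_nonneg_left hx2.le hc0 hcb
    exact le_trans h1 (le_trans h2 (le_of_eq rfl))
  obtain ⟨hiUp, hiLo⟩ := hZ z hzZ
  have hxz : x = c 0 * z := by rw [hzdef, mul_div_cancel₀ _ hc0.ne']
  have hcd' : ∀ i : Fin n, i ≠ 0 → 0 ≤ c i ∧ c i ≤ d := fun i hi =>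
    ⟨(hcd i hi).1, (hcd i hi).2⟩
  -- upper bound on numerator
  have hNup : tailP μ (fun ω => ∑ i, c i * ordDesc X i ω) x ≤
      T (z - δ * h z) + pB z + pE z := by
    have hincl : {ω | x < ∑ i, c i * ordDesc X i ω} ⊆
        {ω | z - δ * h z < maxRV X ω} ∪
        ((⋃ i, ⋃ j ∈ Finset.univ.erase i, {ω | L * h z < X i ω ∧ L * h z < X j ω}) ∪
         (⋃ i, ⋃ j ∈ Finset.univ.erase i,
            {ω | t * h z < |X i ω| ∧ z - C * h z < X j ω})) := by
      intro ω hω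
      have hsum : c 0 * z < ∑ i, c i * (sortD (fun j => X j ω)).getD i 0 := by
        rw [← hxz]; exact hω
      rcases inc_upper (fun j => X j ω) c a d L δ (h z) z ha hd hL hδ (hh z)
          hca hcd' hsum with hcase | hcase | hcase
      · exact Or.inl hcase
      · refine Or.inr (Or.inl ?_)
        obtain ⟨u, v, huv, h1, h2⟩ := hcase
        refine Set.mem_iUnion.mpr ⟨u, Set.mem_iUnion₂.mpr ⟨v, ?_, ⟨h1, h2⟩⟩⟩
        exact Finset.mem_erase.mpr ⟨huv.symm, Finset.mem_univ v⟩
      · refine Or.inr (Or.inr ?_)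
        obtain ⟨u, v, huv, h1, h2⟩ := hcase
        refine Set.mem_iUnion.mpr ⟨u, Set.mem_iUnion₂.mpr ⟨v, ?_, ⟨h1, h2⟩⟩⟩
        exact Finset.mem_erase.mpr ⟨huv.symm, Finset.mem_univ v⟩
    calc tailP μ (fun ω => ∑ i, c i * ordDesc X i ω) x
        ≤ (μ ({ω | z - δ * h z < maxRV X ω} ∪
            ((⋃ i, ⋃ j ∈ Finset.univ.erase i, {ω | L * h z < X i ω ∧ L * h z < X j ω}) ∪
             (⋃ i, ⋃ j ∈ Finset.univ.erase i,
                {ω | t * h z < |X i ω| ∧ z - C * h z < X j ω})))).toReal :=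
          treal_mono μ hincl
      _ ≤ (μ {ω | z - δ * h z < maxRV X ω}).toReal +
          ((μ (⋃ i, ⋃ j ∈ Finset.univ.erase i,
              {ω | L * h z < X i ω ∧ L * h z < X j ω})).toReal +
           (μ (⋃ i, ⋃ j ∈ Finset.univ.erase i,
              {ω | t * h z < |X i ω| ∧ z - C * h z < X j ω})).toReal) := by
          refine le_trans (treal_union_le μ _ _) ?_
          exact add_le_add_right (treal_union_le μ _ _) _
      _ ≤ T (z - δ * h z) + pB z + pE z := by
          rw [add_assoc]
          refine add_le_add_right (add_le_add ?_ ?_) _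
          · refine le_trans ?_ (le_refl (pB z))
            rw [hpBdef]
            have h1 : (⋃ i, ⋃ j ∈ Finset.univ.erase i,
                {ω | L * h z < X i ω ∧ L * h z < X j ω}) =
                ⋃ i ∈ Finset.univ, ⋃ j ∈ Finset.univ.erase i,
                {ω | L * h z < X i ω ∧ L * h z < X j ω} := by simp
            rw [h1]
            refine le_trans (treal_biUnion_le μ Finset.univ _) ?_
            exact Finset.sum_le_sum fun i _ => treal_biUnion_le μ _ _
          · rw [hpEdef]
            have h1 : (⋃ i, ⋃ j ∈ Finset.univ.erase i,
                {ω | t * h z < |X i ω| ∧ z - C * h z < X j ω}) =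
                ⋃ i ∈ Finset.univ, ⋃ j ∈ Finset.univ.erase i,
                {ω | t * h z < |X i ω| ∧ z - C * h z < X j ω} := by simp
            rw [h1]
            refine le_trans (treal_biUnion_le μ Finset.univ _) ?_
            exact Finset.sum_le_sum fun i _ => treal_biUnion_le μ _ _
  -- lower bound on numerator
  have hNlo : T (z + δ * h z) - pN z ≤ tailP μ (fun ω => ∑ i, c i * ordDesc X i ω) x := by
    have hincl : {ω | z + δ * h z < maxRV X ω} ⊆
        {ω | x < ∑ i, c i * ordDesc X i ω} ∪
         (⋃ i, ⋃ j ∈ Finset.univ.erase i, {ω | t * h z < |X i ω| ∧ z < X j ω}) := by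
      intro ω hω
      rcases inc_lower (fun j => X j ω) c a d δ (h z) z ha hd hδ (hh z)
          hca hcd' hω with hcase | hcase
      · left
        rw [hxz]; exact hcase
      · right
        obtain ⟨u, v, huv, h1, h2⟩ := hcase
        refine Set.mem_iUnion.mpr ⟨u, Set.mem_iUnion₂.mpr ⟨v, ?_, ⟨h1, h2⟩⟩⟩
        exact Finset.mem_erase.mpr ⟨huv.symm, Finset.mem_univ v⟩
    have h2 : T (z + δ * h z) ≤ tailP μ (fun ω => ∑ i, c i * ordDesc X i ω) x + pN z := by
      calc T (z + δ * h z)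
          ≤ (μ ({ω | x < ∑ i, c i * ordDesc X i ω} ∪
            (⋃ i, ⋃ j ∈ Finset.univ.erase i,
              {ω | t * h z < |X i ω| ∧ z < X j ω}))).toReal := treal_mono μ hincl
        _ ≤ tailP μ (fun ω => ∑ i, c i * ordDesc X i ω) x +
            (μ (⋃ i, ⋃ j ∈ Finset.univ.erase i,
              {ω | t * h z < |X i ω| ∧ z < X j ω})).toReal := treal_union_le μ _ _
        _ ≤ _ := by
            refine add_le_add_right ?_ _
            rw [hpNdef]
            have h1 : (⋃ i, ⋃ j ∈ Finset.univ.erase i,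
                {ω | t * h z < |X i ω| ∧ z < X j ω}) =
                ⋃ i ∈ Finset.univ, ⋃ j ∈ Finset.univ.erase i,
                {ω | t * h z < |X i ω| ∧ z < X j ω} := by simp
            rw [h1]
            refine le_trans (treal_biUnion_le μ Finset.univ _) ?_
            exact Finset.sum_le_sum fun i _ => treal_biUnion_le μ _ _
    linarith
  -- denominator
  have hden : tailP μ (fun ω => c 0 * maxRV X ω) x = T z :=
    tailP_scale μ (maxRV X) (c 0) x hc0
  have hTz : 0 < T z := hT0 z
  have hupper : tailP μ (fun ω => ∑ i, c i * ordDesc X i ω) x /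
      tailP μ (fun ω => c 0 * maxRV X ω) x < 1 + 3*ε/4 := by
    rw [hden, div_lt_iff₀ hTz]
    exact lt_of_le_of_lt hNup hiUp
  have hlower : 1 - 3*ε/4 < tailP μ (fun ω => ∑ i, c i * ordDesc X i ω) x /
      tailP μ (fun ω => c 0 * maxRV X ω) x := by
    rw [hden, lt_div_iff₀ hTz]
    exact lt_of_lt_of_le hiLo hNlo
  have : dist ((1 : (Fin n → ℝ) → ℝ) c)
      (tailP μ (fun ω => ∑ i, c i * ordDesc X i ω) x /
        tailP μ (fun ω => c 0 * maxRV X ω) x) ≤ 3*ε/4 := by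
    rw [Pi.one_apply, Real.dist_eq, abs_le]
    constructor <;> [linarith; linarith]
  linarith
end Comp1

end Aux

/-- Theorem 3.1 under Assumption A. -/
theorem weighted_order_stats_tail_assumptionA
    {Ω : Type*} [MeasurableSpace Ω] (μ : Measure Ω) [IsProbabilityMeasure μ]
    {n : ℕ} [NeZero n] (X : Fin n → Ω → ℝ) (hXm : ∀ i, Measurable (X i))
    (hA : AssumptionA μ X)
    (a b d : ℝ) (ha : 0 < a) (hab : a ≤ b) (hd : 0 ≤ d) :
    UnifMaxSum μ X
      {c : Fin n → ℝ | c 0 ∈ Set.Icc a b ∧ ∀ i : Fin n, i ≠ 0 → c i ∈ Set.Icc 0 d} := by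
  classical
  obtain ⟨h, hT0, hGMDA, hDS1, L, hL, hDS2⟩ := hA
  have hh : ∀ x, 0 < h x := hGMDA.1
  have hGend : ∀ y : ℝ, Tendsto (fun x => tailP μ (maxRV X) (x + y * h x) /
      tailP μ (maxRV X) x) atTop (𝓝 (Real.exp (-y))) := by
    intro y
    have := hGMDA.2 y
    rwa [endFilter_eq_atTop hT0] at this
  have hTanti : Antitone (tailP μ (maxRV X)) := tailP_anti μ (maxRV X)
  have hTtend : Tendsto (tailP μ (maxRV X)) atTop (𝓝 0) := tailP_max_tendsto μ X hXm
  constructor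
  · exact comp1_uniform μ X h hh hT0 hTanti hTtend hGend hDS1 L hL hDS2 a b d ha hab hd
  · have hcomp2 := comp2_tendsto μ X h hXm hh hT0 hTanti hTtend hGend hDS1
    rw [Metric.tendstoUniformlyOn_iff]
    intro ε hε
    have hev : ∀ᶠ u in atTop,
        dist (tailP μ (maxRV X) u / ∑ i, tailP μ (X i) u) 1 < ε :=
      Metric.tendsto_nhds.mp hcomp2 ε hε
    obtain ⟨Z, hZ⟩ := eventually_atTop.mp hev
    filter_upwards [eventually_ge_atTop (max (b*Z) 0), eventually_gt_atTop 0] with x hx1 hx2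
    intro c hc
    have hc0 : 0 < c 0 := lt_of_lt_of_le ha hc.1.1
    have hzZ : Z ≤ x / c 0 := by
      have h1 : Z ≤ x / b := by
        rw [le_div_iff₀ (lt_of_lt_of_le ha hab)]
        calc Z * b = b * Z := mul_comm _ _
          _ ≤ max (b*Z) 0 := le_max_left _ _
          _ ≤ x := hx1
      have h2 : x / b ≤ x / c 0 := div_le_div_of_nonneg_left hx2.le hc0 hc.1.2
      exact le_trans h1 h2
    have h1 := hZ (x / c 0) hzZ
    have hre1 : tailP μ (fun ω => c 0 * maxRV X ω) x = tailP μ (maxRV X) (x / c 0) :=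
      tailP_scale μ (maxRV X) (c 0) x hc0
    have hre2 : ∑ i, tailP μ (fun ω => c 0 * X i ω) x = ∑ i, tailP μ (X i) (x / c 0) :=
      Finset.sum_congr rfl fun i _ => tailP_scale μ (X i) (c 0) x hc0
    rw [hre1, hre2, Pi.one_apply, dist_comm]
    exact h1
end

section
/- Let X_1,...,X_n be n real-valued (possibly dependent) random variables with order statistics X_{1:n} ≤ ... ≤ X_{n:n}, and suppose Assumption B holds: the distribution function of X_{n:n} is long-tailed (X_{n:n} ∈ 𝓛), and there exists a function h ∈ 𝓗_{X_{n:n}} such that condition (DS1) holds for every t > 0 and condition (DS2) holds for some L > 0. Then for any 0 < a ≤ b < ∞ and 0 ≤ d < ∞, the relation P(∑_{i=0}^{n-1} c_i X_{n-i:n} > x) ~ P(c_0 X_{n:n} > x) ~ ∑_{i=1}^{n} P(c_0 X_i > x) as x → ∞ holds uniformly for (c_0, c_1, ..., c_{n-1}) ∈ [a,b] × [0,d]^{n-1}. -/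
open MeasureTheory Filter Topology Asymptotics

section Helpers
open MeasureTheory Filter Topology
namespace WOS
variable {Ω : Type*} {n : ℕ} (X : Fin n → Ω → ℝ) (ω : Ω)

/-- The sorted (descending) list of values. -/
noncomputable def slist : List ℝ := (List.ofFn fun j => X j ω).mergeSort fun a b => decide (b ≤ a)

lemma ordDesc_eq (i : Fin n) : ordDesc X i ω = (slist X ω).getD i 0 := rfl

lemma slist_length : (slist X ω).length = n := by
  rw [slist, List.length_mergeSort, List.length_ofFn]

lemma lt_slen {m : ℕ} (hm : m < n) : m < (slist X ω).length := by
  rw [slist_length]; exact hm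

lemma slist_pairwise : (slist X ω).Pairwise (fun a b : ℝ => b ≤ a) := by
  have := List.pairwise_mergeSort (le := fun a b : ℝ => decide (b ≤ a))
    (fun a b c h₁ h₂ => by simp_all; linarith)
    (fun a b => by simpa using le_total b a) (List.ofFn fun j => X j ω)
  simpa [slist] using this

lemma slist_perm : (slist X ω).Perm (List.ofFn fun j => X j ω) :=
  List.mergeSort_perm _ _

lemma mem_slist {x : ℝ} : x ∈ slist X ω ↔ ∃ k, X k ω = x := by
  rw [(slist_perm X ω).mem_iff, List.mem_ofFn]

lemma slist_anti {i j : ℕ} (hij : i ≤ j) (hj : j < n) :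
    (slist X ω).getD j 0 ≤ (slist X ω).getD i 0 := by
  rcases eq_or_lt_of_le hij with rfl | hij
  · exact le_refl _
  · rw [List.getD_eq_getElem _ 0 (lt_slen X ω hj),
      List.getD_eq_getElem _ 0 (lt_slen X ω (lt_trans hij hj))]
    exact List.pairwise_iff_get.mp (slist_pairwise X ω) ⟨i, _⟩ ⟨j, _⟩ hij

lemma le_ordDesc_zero [NeZero n] (k : Fin n) : X k ω ≤ ordDesc X 0 ω := by
  have hn : 0 < n := Nat.pos_of_ne_zero (NeZero.ne n)
  have hmem : X k ω ∈ slist X ω := (mem_slist X ω).mpr ⟨k, rfl⟩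
  obtain ⟨m, hm, hx⟩ := List.mem_iff_getElem.mp hmem
  rw [ordDesc_eq]
  simp only [Fin.val_zero]
  rw [List.getD_eq_getElem _ 0 (lt_slen X ω hn)]
  rcases Nat.eq_zero_or_pos m with rfl | hm0
  · rw [← hx]
  · rw [← hx]
    exact List.pairwise_iff_get.mp (slist_pairwise X ω) ⟨0, lt_slen X ω hn⟩ ⟨m, hm⟩ hm0

end WOS

namespace WOS
variable {Ω : Type*} {n : ℕ} (X : Fin n → Ω → ℝ) (ω : Ω)

lemma maxRV_eq [NeZero n] : maxRV X ω = ordDesc X 0 ω := by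
  have hn : 0 < n := Nat.pos_of_ne_zero (NeZero.ne n)
  haveI : Nonempty (Fin n) := Fin.pos_iff_nonempty.mp hn
  refine le_antisymm (ciSup_le fun k => le_ordDesc_zero X ω k) ?_
  · have hmem : (slist X ω).getD 0 0 ∈ slist X ω := by
      rw [List.getD_eq_getElem _ 0 (lt_slen X ω hn)]
      exact List.getElem_mem _
    obtain ⟨k, hk⟩ := (mem_slist X ω).mp hmem
    rw [ordDesc_eq]
    simp only [Fin.val_zero]
    rw [← hk]
    show X k ω ≤ ⨆ i, X i ω
    exact le_ciSup (f := fun i => X i ω) (Set.Finite.bddAbove (Set.finite_range _)) k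

lemma exists_gt_of_lt_maxRV [NeZero n] {v : ℝ} (h : v < maxRV X ω) : ∃ j, v < X j ω := by
  haveI : Nonempty (Fin n) := Fin.pos_iff_nonempty.mp (Nat.pos_of_ne_zero (NeZero.ne n))
  by_contra hc
  push_neg at hc
  exact absurd (ciSup_le hc : maxRV X ω ≤ v) (not_le.mpr h)

lemma ordDesc_mem (i : Fin n) : ∃ k, X k ω = ordDesc X i ω := by
  apply (mem_slist X ω).mp
  rw [ordDesc_eq, List.getD_eq_getElem _ 0 (lt_slen X ω i.isLt)]
  exact List.getElem_mem _

lemma two_indices {v : ℝ} (hn : 1 < n) (h1 : v < (slist X ω).getD 1 0) :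
    ∃ i j : Fin n, i ≠ j ∧ v < X i ω ∧ v < X j ω := by
  classical
  set p : ℝ → Bool := fun z => decide (v < z) with hp
  have hcount : 2 ≤ (slist X ω).countP p := by
    have hlen := slist_length X ω
    rcases hl : slist X ω with _ | ⟨x, _ | ⟨y, t⟩⟩
    · rw [hl] at hlen; simp at hlen; omega
    · rw [hl] at hlen; simp at hlen; omega
    · have hy : v < y := by rw [hl] at h1; simpa using h1
      have hx : v < x := by
        have := slist_anti X ω (Nat.zero_le 1) hn
        rw [hl] at this; simp at this; linarith
      rw [List.countP_cons, List.countP_cons]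
      simp [hp, hx, hy]
  have hcount2 : 2 ≤ ((List.finRange n).filter (fun k => p (X k ω))).length := by
    have h1' := (slist_perm X ω).countP_eq p
    rw [List.ofFn_eq_map, List.countP_map] at h1'
    rw [← List.countP_eq_length_filter]
    calc 2 ≤ (slist X ω).countP p := hcount
    _ = _ := h1'
  set lf := (List.finRange n).filter (fun k => p (X k ω)) with hlf
  have hnd : lf.Nodup := (List.nodup_finRange n).filter _
  have h0 : 0 < lf.length := by omega
  have h1' : 1 < lf.length := by omega
  refine ⟨lf.get ⟨0, h0⟩, lf.get ⟨1, h1'⟩, ?_, ?_, ?_⟩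
  · intro hEq
    have := (List.Nodup.get_inj_iff hnd).mp hEq
    simp at this
  · have hm : lf.get ⟨0, h0⟩ ∈ lf := List.get_mem _ _
    have := (List.mem_filter.mp hm).2
    simpa [hp] using this
  · have hm : lf.get ⟨1, h1'⟩ ∈ lf := List.get_mem _ _
    have := (List.mem_filter.mp hm).2
    simpa [hp] using this

lemma second_le [NeZero n] {v : ℝ}
    (hv : ∀ i j : Fin n, i ≠ j → ¬(v < X i ω ∧ v < X j ω))
    (i : Fin n) (hi : i ≠ 0) : ordDesc X i ω ≤ v := by
  by_contra hc
  push_neg at hc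
  have hi1 : 1 ≤ (i : ℕ) := by
    rcases Nat.eq_zero_or_pos (i : ℕ) with h | h
    · exact absurd (Fin.ext h : i = 0) hi
    · exact h
  have hn : 1 < n := lt_of_le_of_lt hi1 i.isLt
  have h1 : v < (slist X ω).getD 1 0 :=
    lt_of_lt_of_le (by rw [ordDesc_eq] at hc; exact hc) (slist_anti X ω hi1 i.isLt)
  obtain ⟨i', j', hne, h₁, h₂⟩ := two_indices X ω hn h1
  exact hv i' j' hne ⟨h₁, h₂⟩

end WOS

namespace WOS
variable {Ω : Type*} {n : ℕ} [NeZero n] (X : Fin n → Ω → ℝ) (ω : Ω)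

lemma det_upper {c : Fin n → ℝ} {y v s d : ℝ} (hv : 0 ≤ v)
    (hc0 : 0 < c 0) (hci : ∀ i, i ≠ 0 → 0 ≤ c i ∧ c i ≤ d)
    (hs : (↑(n - 1) : ℝ) * d * v ≤ c 0 * s)
    (hsum : c 0 * y < ∑ i, c i * ordDesc X i ω) :
    y - s < maxRV X ω ∨ ∃ i j : Fin n, i ≠ j ∧ v < X i ω ∧ v < X j ω := by
  by_cases hBig : ∃ i j : Fin n, i ≠ j ∧ v < X i ω ∧ v < X j ω
  · exact Or.inr hBig
  push_neg at hBig
  left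
  have hsec : ∀ i : Fin n, i ≠ 0 → ordDesc X i ω ≤ v := by
    intro i hi
    exact second_le X ω (fun i j hij h => (not_le.mpr h.2) (hBig i j hij h.1)) i hi
  have hsplit : ∑ i, c i * ordDesc X i ω
      = (∑ i ∈ Finset.univ.erase 0, c i * ordDesc X i ω) + c 0 * ordDesc X 0 ω :=
    (Finset.sum_erase_add _ _ (Finset.mem_univ 0)).symm
  have hbound : ∑ i ∈ Finset.univ.erase 0, c i * ordDesc X i ω ≤ (↑(n - 1) : ℝ) * (d * v) := by
    have h1 : ∀ i ∈ Finset.univ.erase 0, c i * ordDesc X i ω ≤ d * v := by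
      intro i hi
      have hi0 : i ≠ 0 := (Finset.mem_erase.mp hi).1
      have h2 := hsec i hi0
      have h3 := hci i hi0
      calc c i * ordDesc X i ω ≤ c i * v := by
            exact mul_le_mul_of_nonneg_left h2 h3.1
        _ ≤ d * v := mul_le_mul_of_nonneg_right h3.2 hv
    calc ∑ i ∈ Finset.univ.erase 0, c i * ordDesc X i ω
        ≤ ∑ _i ∈ Finset.univ.erase 0, d * v := Finset.sum_le_sum h1
      _ = (↑(n - 1) : ℝ) * (d * v) := by
          rw [Finset.sum_const, Finset.card_erase_of_mem (Finset.mem_univ 0),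
            Finset.card_univ, Fintype.card_fin, nsmul_eq_mul]
  have hkey : c 0 * (y - s) < c 0 * ordDesc X 0 ω := by
    have := hsum
    rw [hsplit] at this
    have h4 : (↑(n - 1) : ℝ) * (d * v) ≤ c 0 * s := by rw [← mul_assoc]; exact hs
    nlinarith
  rw [maxRV_eq]
  exact lt_of_mul_lt_mul_left hkey (le_of_lt hc0)

lemma det_lower {c : Fin n → ℝ} {y v s d : ℝ} (hv : 0 ≤ v)
    (hc0 : 0 < c 0) (hci : ∀ i, i ≠ 0 → 0 ≤ c i ∧ c i ≤ d)
    (hs : (↑(n - 1) : ℝ) * d * v ≤ c 0 * s)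
    (j : Fin n) (hj : y + s < X j ω) (hother : ∀ i, i ≠ j → |X i ω| ≤ v)
    (hvs : v < y + s) :
    c 0 * y < ∑ i, c i * ordDesc X i ω := by
  have hBig : ∀ i' j' : Fin n, i' ≠ j' → ¬(v < X i' ω ∧ v < X j' ω) := by
    intro i' j' hne h
    rcases eq_or_ne i' j with rfl | hi'
    · exact absurd h.2 (not_lt.mpr ((abs_le.mp (hother j' (fun hEq => hne hEq.symm))).2))
    · exact absurd h.1 (not_lt.mpr ((abs_le.mp (hother i' hi')).2))
  have hsec : ∀ i : Fin n, i ≠ 0 → ordDesc X i ω ≤ v :=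
    fun i hi => second_le X ω hBig i hi
  have hlow : ∀ i : Fin n, i ≠ 0 → -v ≤ ordDesc X i ω := by
    intro i hi
    obtain ⟨k, hk⟩ := ordDesc_mem X ω i
    rcases eq_or_ne k j with rfl | hkj
    · exact absurd (hk ▸ (hsec i hi)) (not_le.mpr (lt_trans hvs hj))
    · rw [← hk]; exact (abs_le.mp (hother k hkj)).1
  have h00 : c 0 * (y + s) < c 0 * ordDesc X 0 ω :=
    mul_lt_mul_of_pos_left (lt_of_lt_of_le hj (le_ordDesc_zero X ω j)) hc0
  have hbound : -((↑(n - 1) : ℝ) * (d * v)) ≤ ∑ i ∈ Finset.univ.erase 0, c i * ordDesc X i ω := by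
    have h1 : ∀ i ∈ Finset.univ.erase 0, -(d * v) ≤ c i * ordDesc X i ω := by
      intro i hi
      have hi0 : i ≠ 0 := (Finset.mem_erase.mp hi).1
      have h3 := hci i hi0
      calc -(d * v) ≤ -(c i * v) := by nlinarith [hlow i hi0, hsec i hi0]
        _ = c i * (-v) := by ring
        _ ≤ c i * ordDesc X i ω := mul_le_mul_of_nonneg_left (hlow i hi0) h3.1
    calc -((↑(n - 1) : ℝ) * (d * v)) = ∑ _i ∈ Finset.univ.erase 0, -(d * v) := by
          rw [Finset.sum_const, Finset.card_erase_of_mem (Finset.mem_univ 0),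
            Finset.card_univ, Fintype.card_fin, nsmul_eq_mul, mul_neg]
      _ ≤ _ := Finset.sum_le_sum h1
  have hsplit : ∑ i, c i * ordDesc X i ω
      = (∑ i ∈ Finset.univ.erase 0, c i * ordDesc X i ω) + c 0 * ordDesc X 0 ω :=
    (Finset.sum_erase_add _ _ (Finset.mem_univ 0)).symm
  rw [hsplit]
  have h4 : (↑(n - 1) : ℝ) * (d * v) ≤ c 0 * s := by rw [← mul_assoc]; exact hs
  nlinarith

end WOS

set_option linter.unusedSectionVars false
namespace WOS
variable {Ω : Type*} [MeasurableSpace Ω] (μ : Measure Ω) [IsProbabilityMeasure μ]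


lemma sum_ne_top' {ι : Type*} {s : Finset ι} {f : ι → ENNReal} (h : ∀ i ∈ s, f i ≠ ⊤) :
    ∑ i ∈ s, f i ≠ ⊤ := fun H => by
  obtain ⟨a, ha, hat⟩ := ENNReal.sum_eq_top.mp H
  exact h a ha hat

lemma preal_mono {s t : Set Ω} (h : s ⊆ t) : (μ s).toReal ≤ (μ t).toReal :=
  ENNReal.toReal_mono (measure_ne_top μ t) (measure_mono h)

lemma preal_union_le (s t : Set Ω) : (μ (s ∪ t)).toReal ≤ (μ s).toReal + (μ t).toReal := by
  rw [← ENNReal.toReal_add (measure_ne_top μ s) (measure_ne_top μ t)]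
  exact ENNReal.toReal_mono (by finiteness) (measure_union_le s t)

lemma preal_biUnion_le {ι : Type*} (s : Finset ι) (A : ι → Set Ω) :
    (μ (⋃ i ∈ s, A i)).toReal ≤ ∑ i ∈ s, (μ (A i)).toReal := by
  rw [← ENNReal.toReal_sum (fun i _ => measure_ne_top μ (A i))]
  exact ENNReal.toReal_mono (sum_ne_top' fun i _ => measure_ne_top μ _) (measure_biUnion_finset_le s A)

lemma preal_diff_ge (E U : Set Ω) : (μ E).toReal - (μ U).toReal ≤ (μ (E \ U)).toReal := by
  have h : (μ E).toReal ≤ (μ (E \ U)).toReal + (μ U).toReal := by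
    calc (μ E).toReal ≤ (μ ((E \ U) ∪ U)).toReal :=
        preal_mono μ (fun x hx => by by_cases h : x ∈ U <;> simp [h, hx])
      _ ≤ _ := preal_union_le μ _ _
  linarith

lemma sum_measure_le_union_add {ι : Type*} [DecidableEq ι] (s : Finset ι) (A : ι → Set Ω)
    (hA : ∀ i, MeasurableSet (A i)) :
    ∑ i ∈ s, μ (A i) ≤ μ (⋃ i ∈ s, A i) + ∑ i ∈ s, ∑ j ∈ s.erase i, μ (A i ∩ A j) := by
  induction s using Finset.induction_on with
  | empty => simp
  | insert k s hk ih =>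
    rw [Finset.sum_insert hk, Finset.set_biUnion_insert]
    have key : μ (A k) + μ (⋃ i ∈ s, A i)
        = μ (A k ∪ ⋃ i ∈ s, A i) + μ (A k ∩ ⋃ i ∈ s, A i) :=
      (measure_union_add_inter _ (MeasurableSet.biUnion s.countable_toSet fun i _ => hA i)).symm
    have hinter : μ (A k ∩ ⋃ i ∈ s, A i) ≤ ∑ i ∈ s, μ (A k ∩ A i) := by
      rw [Set.inter_iUnion₂]
      exact measure_biUnion_finset_le s _
    have hpairs : (∑ j ∈ s, μ (A k ∩ A j)) + ∑ i ∈ s, ∑ j ∈ s.erase i, μ (A i ∩ A j)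
        ≤ ∑ i ∈ insert k s, ∑ j ∈ (insert k s).erase i, μ (A i ∩ A j) := by
      rw [Finset.sum_insert hk, Finset.erase_insert hk]
      gcongr with i hi
      exact Finset.subset_insert k s
    calc μ (A k) + ∑ i ∈ s, μ (A i)
        ≤ μ (A k) + (μ (⋃ i ∈ s, A i) + ∑ i ∈ s, ∑ j ∈ s.erase i, μ (A i ∩ A j)) := by
          gcongr
      _ = (μ (A k) + μ (⋃ i ∈ s, A i)) + ∑ i ∈ s, ∑ j ∈ s.erase i, μ (A i ∩ A j) := by ring
      _ = (μ (A k ∪ ⋃ i ∈ s, A i) + μ (A k ∩ ⋃ i ∈ s, A i))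
            + ∑ i ∈ s, ∑ j ∈ s.erase i, μ (A i ∩ A j) := by rw [key]
      _ ≤ μ (A k ∪ ⋃ i ∈ s, A i) + ((∑ j ∈ s, μ (A k ∩ A j))
            + ∑ i ∈ s, ∑ j ∈ s.erase i, μ (A i ∩ A j)) := by
          rw [add_assoc]
          gcongr
      _ ≤ _ := by gcongr

lemma preal_sum_le_union_add {ι : Type*} [DecidableEq ι] (s : Finset ι) (A : ι → Set Ω)
    (hA : ∀ i, MeasurableSet (A i)) :
    ∑ i ∈ s, (μ (A i)).toReal
      ≤ (μ (⋃ i ∈ s, A i)).toReal + ∑ i ∈ s, ∑ j ∈ s.erase i, (μ (A i ∩ A j)).toReal := by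
  have h := sum_measure_le_union_add μ s A hA
  have h1 : (∑ i ∈ s, μ (A i)).toReal
      ≤ (μ (⋃ i ∈ s, A i) + ∑ i ∈ s, ∑ j ∈ s.erase i, μ (A i ∩ A j)).toReal := by
    exact ENNReal.toReal_mono (ENNReal.add_ne_top.mpr ⟨measure_ne_top μ _,
      sum_ne_top' fun i _ => sum_ne_top' fun j _ => measure_ne_top μ _⟩) h
  rw [ENNReal.toReal_sum (fun i _ => measure_ne_top μ (A i))] at h1
  rw [ENNReal.toReal_add (measure_ne_top μ _) (sum_ne_top' fun i _ => sum_ne_top' fun j _ => measure_ne_top μ _)] at h1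
  rw [ENNReal.toReal_sum (fun i _ => sum_ne_top' fun j _ => measure_ne_top μ _)] at h1
  calc ∑ i ∈ s, (μ (A i)).toReal
      ≤ (μ (⋃ i ∈ s, A i)).toReal + ∑ i ∈ s, ((∑ j ∈ s.erase i, μ (A i ∩ A j)).toReal) := h1
    _ = _ := by
        congr 1
        exact Finset.sum_congr rfl fun i _ =>
          ENNReal.toReal_sum (fun j _ => measure_ne_top μ _)

end WOS

end Helpers

set_option maxHeartbeats 1000000 in
/-- Theorem 3.1 under Assumption B. -/
theorem weighted_order_stats_tail_assumptionB
    {Ω : Type*} [MeasurableSpace Ω] (μ : Measure Ω) [IsProbabilityMeasure μ]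
    {n : ℕ} [NeZero n] (X : Fin n → Ω → ℝ) (hXm : ∀ i, Measurable (X i))
    (hB : AssumptionB μ X)
    (a b d : ℝ) (ha : 0 < a) (hab : a ≤ b) (hd : 0 ≤ d) :
    UnifMaxSum μ X
      {c : Fin n → ℝ | c 0 ∈ Set.Icc a b ∧ ∀ i : Fin n, i ≠ 0 → c i ∈ Set.Icc 0 d} := by
  classical
  obtain ⟨⟨hTpos, _hTlong⟩, h, ⟨hhpos, hho, hhT, _hwsn⟩, hDS1, L, hL, hDS2⟩ := hB
  have hb : 0 < b := lt_of_lt_of_le ha hab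
  set T : ℝ → ℝ := tailP μ (maxRV X) with hTdefn
  have hTdef : ∀ z : ℝ, T z = (μ {ω | z < maxRV X ω}).toReal := fun z => rfl
  have hTnn : ∀ z : ℝ, 0 ≤ T z := fun z => ENNReal.toReal_nonneg
  set κ0 : ℝ := (↑(n - 1) : ℝ) * d * L / a with hκ0def
  have hκ0 : 0 ≤ κ0 := by
    apply div_nonneg _ ha.le
    positivity
  have hκa : (↑(n - 1) : ℝ) * d * L = a * κ0 := by
    rw [hκ0def]; field_simp
  -- the error quotient functions
  set Q1 : ℝ → ℝ := fun y => ∑ i : Fin n, ∑ j ∈ Finset.univ.erase i,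
      (μ {ω | L * h y < |X i ω| ∧ y < X j ω}).toReal / T y with hQ1def
  set Q2 : ℝ → ℝ := fun y => ∑ i : Fin n, ∑ j ∈ Finset.univ.erase i,
      (μ {ω | L * h y < X i ω ∧ L * h y < X j ω}).toReal / T y with hQ2def
  have hQ1 : Tendsto Q1 atTop (𝓝 0) := by
    rw [hQ1def]
    have : (0 : ℝ) = ∑ _i : Fin n, ∑ _j ∈ Finset.univ.erase _i, (0 : ℝ) := by simp
    rw [this]
    apply tendsto_finset_sum
    intro i _
    apply tendsto_finset_sum
    intro j hj
    exact hDS1 L hL i j (Ne.symm (Finset.mem_erase.mp hj).1)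
  have hQ2 : Tendsto Q2 atTop (𝓝 0) := by
    rw [hQ2def]
    have : (0 : ℝ) = ∑ _i : Fin n, ∑ _j ∈ Finset.univ.erase _i, (0 : ℝ) := by simp
    rw [this]
    apply tendsto_finset_sum
    intro i _
    apply tendsto_finset_sum
    intro j hj
    have hji : j ≠ i := (Finset.mem_erase.mp hj).1
    rcases lt_or_gt_of_ne (Ne.symm hji) with hij | hij
    · exact hDS2 i j hij
    · have hfun : (fun x => (μ {ω | L * h x < X i ω ∧ L * h x < X j ω}).toReal / T x)
          = fun x => (μ {ω | L * h x < X j ω ∧ L * h x < X i ω}).toReal / T x := by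
        funext x
        have hseteq : {ω | L * h x < X i ω ∧ L * h x < X j ω}
            = {ω | L * h x < X j ω ∧ L * h x < X i ω} := by
          ext ω
          exact and_comm
        rw [hseteq]
      rw [hfun]
      exact hDS2 j i hij
  have hLhev : ∀ᶠ y in atTop, L * h y < y := by
    have h2 := hho.def (show (0:ℝ) < 1/(2*(L+1)) by positivity)
    filter_upwards [h2, eventually_gt_atTop 0] with y hy hy0
    simp only [Real.norm_eq_abs] at hy
    have h3 : h y ≤ |h y| := le_abs_self _
    have h4 : |y| = y := abs_of_pos hy0
    rw [h4] at hy
    have h5 : L * h y ≤ L * |h y| := mul_le_mul_of_nonneg_left h3 hL.le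
    have h6 : L * |h y| ≤ L * (1 / (2 * (L + 1)) * y) := mul_le_mul_of_nonneg_left hy hL.le
    have hL1 : 0 < 2 * (L + 1) := by linarith
    have h7 : L * (1 / (2 * (L + 1)) * y) < y := by
      rw [show L * (1 / (2 * (L + 1)) * y) = (L * y) / (2 * (L + 1)) by ring,
        div_lt_iff₀ hL1]
      nlinarith
    linarith
  have hEv : ∀ ε' : ℝ, 0 < ε' → ∀ᶠ y in atTop,
      0 ≤ y ∧ 0 < h y ∧ L * h y < y ∧ |Q1 y| < ε' ∧ |Q2 y| < ε' ∧
      |T (y + κ0 * h y) / T y - 1| < ε' ∧ |T (y + (-κ0) * h y) / T y - 1| < ε' := by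
    intro ε' hε'
    have e1 : ∀ᶠ y in atTop, |Q1 y| < ε' := by
      have := Metric.tendsto_nhds.mp hQ1 ε' hε'
      simpa [Real.dist_eq] using this
    have e2 : ∀ᶠ y in atTop, |Q2 y| < ε' := by
      have := Metric.tendsto_nhds.mp hQ2 ε' hε'
      simpa [Real.dist_eq] using this
    have e3 : ∀ᶠ y in atTop, |T (y + κ0 * h y) / T y - 1| < ε' := by
      have := Metric.tendsto_nhds.mp (hhT κ0) ε' hε'
      simpa [Real.dist_eq] using this
    have e4 : ∀ᶠ y in atTop, |T (y + (-κ0) * h y) / T y - 1| < ε' := by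
      have := Metric.tendsto_nhds.mp (hhT (-κ0)) ε' hε'
      simpa [Real.dist_eq] using this
    filter_upwards [eventually_ge_atTop (0:ℝ), hhpos, hLhev, e1, e2, e3, e4] with
      y h1 h2 h3 h4 h5 h6 h7
    exact ⟨h1, h2, h3, h4, h5, h6, h7⟩
  constructor
  · -- Part 1: P(sum) / P(c0 * max) → 1 uniformly
    rw [Metric.tendstoUniformlyOn_iff]
    intro ε hε
    set ε' : ℝ := ε / 3 with hε'def
    have hε' : 0 < ε' := by positivity
    obtain ⟨M, hM⟩ := eventually_atTop.mp (hEv ε' hε')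
    filter_upwards [eventually_ge_atTop (max (b * M) 1)] with x hx
    intro c hc
    obtain ⟨hcIcc, hcK⟩ := hc
    obtain ⟨hca, hcb⟩ := hcIcc
    have hc0 : 0 < c 0 := lt_of_lt_of_le ha hca
    have hx1 : (1:ℝ) ≤ x := le_trans (le_max_right _ _) hx
    have hx0 : (0:ℝ) ≤ x := by linarith
    set y : ℝ := x / c 0 with hydef
    have hy0 : 0 ≤ y := div_nonneg hx0 hc0.le
    have hyM : M ≤ y := by
      have h1 : M ≤ x / b := by
        rw [le_div_iff₀ hb, mul_comm]
        exact le_trans (le_max_left _ _) hx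
      have h2 : x / b ≤ x / c 0 := div_le_div_of_nonneg_left hx0 hc0 hcb
      linarith
    obtain ⟨-, hhy, hLhy, hQ1y, hQ2y, hsp, hsm⟩ := hM y hyM
    have hTy : 0 < T y := hTpos y hy0
    have hxy : c 0 * y = x := by
      rw [hydef]; field_simp
    -- denominator rewrite
    have hD : tailP μ (fun ω => c 0 * maxRV X ω) x = T y := by
      rw [hTdef]
      show (μ {ω | x < c 0 * maxRV X ω}).toReal = _
      have hseteq : {ω | x < c 0 * maxRV X ω} = {ω | y < maxRV X ω} := by
        ext ω
        simp only [Set.mem_setOf_eq]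
        rw [hydef, div_lt_iff₀ hc0, mul_comm]
      rw [hseteq]
    -- weight bounds
    have hci : ∀ i, i ≠ 0 → 0 ≤ c i ∧ c i ≤ d := fun i hi => ⟨(hcK i hi).1, (hcK i hi).2⟩
    have hv : 0 ≤ L * h y := mul_nonneg hL.le hhy.le
    have hs : (↑(n - 1) : ℝ) * d * (L * h y) ≤ c 0 * (κ0 * h y) := by
      have h1 : (↑(n - 1) : ℝ) * d * L ≤ c 0 * κ0 :=
        hκa ▸ mul_le_mul_of_nonneg_right hca hκ0
      calc (↑(n - 1) : ℝ) * d * (L * h y) = ((↑(n - 1) : ℝ) * d * L) * h y := by ring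
        _ ≤ (c 0 * κ0) * h y := mul_le_mul_of_nonneg_right h1 hhy.le
        _ = c 0 * (κ0 * h y) := by ring
    set N : ℝ := tailP μ (fun ω => ∑ i, c i * ordDesc X i ω) x with hNdef
    have hNd : N = (μ {ω | x < ∑ i, c i * ordDesc X i ω}).toReal := rfl
    -- pair sums
    have hq1sum : ∑ i : Fin n, ∑ j ∈ Finset.univ.erase i,
        (μ {ω | L * h y < |X i ω| ∧ y < X j ω}).toReal = Q1 y * T y := by
      rw [hQ1def]
      rw [Finset.sum_mul]
      refine Finset.sum_congr rfl fun i _ => ?_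
      rw [Finset.sum_mul]
      exact Finset.sum_congr rfl fun j _ => (div_mul_cancel₀ _ (ne_of_gt hTy)).symm
    have hq2sum : ∑ i : Fin n, ∑ j ∈ Finset.univ.erase i,
        (μ {ω | L * h y < X i ω ∧ L * h y < X j ω}).toReal = Q2 y * T y := by
      rw [hQ2def]
      rw [Finset.sum_mul]
      refine Finset.sum_congr rfl fun i _ => ?_
      rw [Finset.sum_mul]
      exact Finset.sum_congr rfl fun j _ => (div_mul_cancel₀ _ (ne_of_gt hTy)).symm
    -- Upper bound for N
    have hsubU : {ω | x < ∑ i, c i * ordDesc X i ω}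
        ⊆ {ω | y - κ0 * h y < maxRV X ω} ∪
          ⋃ i ∈ (Finset.univ : Finset (Fin n)), ⋃ j ∈ Finset.univ.erase i,
            {ω | L * h y < X i ω ∧ L * h y < X j ω} := by
      intro ω hω
      simp only [Set.mem_setOf_eq] at hω
      rw [← hxy] at hω
      rcases WOS.det_upper X ω hv hc0 hci hs hω with hmax | ⟨i, j, hij, h1, h2⟩
      · exact Or.inl hmax
      · refine Or.inr (Set.mem_biUnion (Finset.mem_univ i) ?_)
        exact Set.mem_biUnion (Finset.mem_erase.mpr ⟨Ne.symm hij, Finset.mem_univ j⟩) ⟨h1, h2⟩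
    have hU2le : (μ (⋃ i ∈ (Finset.univ : Finset (Fin n)), ⋃ j ∈ Finset.univ.erase i,
        {ω | L * h y < X i ω ∧ L * h y < X j ω})).toReal ≤ Q2 y * T y := by
      rw [← hq2sum]
      calc (μ _).toReal ≤ ∑ i : Fin n, (μ (⋃ j ∈ Finset.univ.erase i,
          {ω | L * h y < X i ω ∧ L * h y < X j ω})).toReal := WOS.preal_biUnion_le μ _ _
        _ ≤ _ := Finset.sum_le_sum fun i _ => WOS.preal_biUnion_le μ _ _
    have hNupper : N ≤ T (y - κ0 * h y) + Q2 y * T y := by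
      rw [hNd]
      calc (μ {ω | x < ∑ i, c i * ordDesc X i ω}).toReal
          ≤ (μ ({ω | y - κ0 * h y < maxRV X ω} ∪ _)).toReal := WOS.preal_mono μ hsubU
        _ ≤ (μ {ω | y - κ0 * h y < maxRV X ω}).toReal + _ := WOS.preal_union_le μ _ _
        _ ≤ T (y - κ0 * h y) + Q2 y * T y := by
            rw [hTdef]
            exact add_le_add_right hU2le _
    -- Lower bound for N
    have hsubL : {ω | y + κ0 * h y < maxRV X ω} \
        (⋃ i ∈ (Finset.univ : Finset (Fin n)), ⋃ j ∈ Finset.univ.erase i,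
          {ω | L * h y < |X i ω| ∧ y < X j ω})
        ⊆ {ω | x < ∑ i, c i * ordDesc X i ω} := by
      rintro ω ⟨hE, hU⟩
      simp only [Set.mem_setOf_eq] at hE ⊢
      obtain ⟨j, hj⟩ := WOS.exists_gt_of_lt_maxRV X ω hE
      have hκh : 0 ≤ κ0 * h y := mul_nonneg hκ0 hhy.le
      have hother : ∀ i, i ≠ j → |X i ω| ≤ L * h y := by
        intro i hi
        by_contra habs
        push_neg at habs
        apply hU
        refine Set.mem_biUnion (Finset.mem_univ i) ?_
        refine Set.mem_biUnion (Finset.mem_erase.mpr ⟨Ne.symm hi, Finset.mem_univ j⟩) ?_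
        exact ⟨habs, by linarith⟩
      have hvs : L * h y < y + κ0 * h y := by linarith
      rw [← hxy]
      exact WOS.det_lower X ω hv hc0 hci hs j hj hother hvs
    have hU1le : (μ (⋃ i ∈ (Finset.univ : Finset (Fin n)), ⋃ j ∈ Finset.univ.erase i,
        {ω | L * h y < |X i ω| ∧ y < X j ω})).toReal ≤ Q1 y * T y := by
      rw [← hq1sum]
      calc (μ _).toReal ≤ ∑ i : Fin n, (μ (⋃ j ∈ Finset.univ.erase i,
          {ω | L * h y < |X i ω| ∧ y < X j ω})).toReal := WOS.preal_biUnion_le μ _ _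
        _ ≤ _ := Finset.sum_le_sum fun i _ => WOS.preal_biUnion_le μ _ _
    have hNlower : T (y + κ0 * h y) - Q1 y * T y ≤ N := by
      rw [hNd]
      have h1 : (μ ({ω | y + κ0 * h y < maxRV X ω} \ _)).toReal
          ≤ (μ {ω | x < ∑ i, c i * ordDesc X i ω}).toReal := WOS.preal_mono μ hsubL
      have h2 := WOS.preal_diff_ge μ {ω | y + κ0 * h y < maxRV X ω}
        (⋃ i ∈ (Finset.univ : Finset (Fin n)), ⋃ j ∈ Finset.univ.erase i,
          {ω | L * h y < |X i ω| ∧ y < X j ω})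
      rw [← hTdef] at h2
      linarith
    -- convert the shift estimates
    have hsm' : T (y - κ0 * h y) < (1 + ε') * T y := by
      have heq : y + (-κ0) * h y = y - κ0 * h y := by ring
      rw [heq] at hsm
      obtain ⟨-, h2⟩ := abs_lt.mp hsm
      exact (div_lt_iff₀ hTy).mp (by linarith : T (y - κ0 * h y) / T y < 1 + ε')
    have hsp' : (1 - ε') * T y < T (y + κ0 * h y) := by
      obtain ⟨h1, -⟩ := abs_lt.mp hsp
      exact (lt_div_iff₀ hTy).mp (by linarith : 1 - ε' < T (y + κ0 * h y) / T y)
    have hQ1y' : Q1 y < ε' := lt_of_le_of_lt (le_abs_self _) hQ1y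
    have hQ2y' : Q2 y < ε' := lt_of_le_of_lt (le_abs_self _) hQ2y
    have hQ1nn : 0 ≤ Q1 y := by
      rw [hQ1def]
      refine Finset.sum_nonneg fun i _ => Finset.sum_nonneg fun j _ => ?_
      exact div_nonneg ENNReal.toReal_nonneg (hTnn y)
    -- combine
    have hm2 : Q2 y * T y < ε' * T y := mul_lt_mul_of_pos_right hQ2y' hTy
    have hm1 : Q1 y * T y < ε' * T y := mul_lt_mul_of_pos_right hQ1y' hTy
    have hNub : N < (1 + 2 * ε') * T y := by linarith only [hNupper, hsm', hm2]
    have hNlb : (1 - 2 * ε') * T y < N := by linarith only [hNlower, hsp', hm1]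
    rw [hD]
    simp only [Pi.one_apply, Real.dist_eq]
    have hr1 : N / T y < 1 + 2 * ε' := (div_lt_iff₀ hTy).mpr (by linarith)
    have hr2 : 1 - 2 * ε' < N / T y := (lt_div_iff₀ hTy).mpr (by linarith)
    rw [abs_lt]
    constructor
    · linarith only [hr1, hr2, hε, hε'def]
    · linarith only [hr1, hr2, hε, hε'def]
  · -- Part 2: P(c0 * max) / Σ P(c0 * X i) → 1 uniformly
    rw [Metric.tendstoUniformlyOn_iff]
    intro ε hε
    set ε' : ℝ := min (ε / 2) (1 / 2) with hε'def
    have hε' : 0 < ε' := lt_min (by positivity) (by norm_num)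
    have hε'le : ε' ≤ 1 / 2 := min_le_right _ _
    have hε'le2 : ε' ≤ ε / 2 := min_le_left _ _
    obtain ⟨M, hM⟩ := eventually_atTop.mp (hEv ε' hε')
    filter_upwards [eventually_ge_atTop (max (b * M) 1)] with x hx
    intro c hc
    obtain ⟨hcIcc, hcK⟩ := hc
    obtain ⟨hca, hcb⟩ := hcIcc
    have hc0 : 0 < c 0 := lt_of_lt_of_le ha hca
    have hx1 : (1:ℝ) ≤ x := le_trans (le_max_right _ _) hx
    have hx0 : (0:ℝ) ≤ x := by linarith
    set y : ℝ := x / c 0 with hydef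
    have hy0 : 0 ≤ y := div_nonneg hx0 hc0.le
    have hyM : M ≤ y := by
      have h1 : M ≤ x / b := by
        rw [le_div_iff₀ hb, mul_comm]
        exact le_trans (le_max_left _ _) hx
      have h2 : x / b ≤ x / c 0 := div_le_div_of_nonneg_left hx0 hc0 hcb
      linarith
    obtain ⟨-, hhy, hLhy, -, hQ2y, -, -⟩ := hM y hyM
    have hTy : 0 < T y := hTpos y hy0
    have hD : tailP μ (fun ω => c 0 * maxRV X ω) x = T y := by
      rw [hTdef]
      show (μ {ω | x < c 0 * maxRV X ω}).toReal = _
      have hseteq : {ω | x < c 0 * maxRV X ω} = {ω | y < maxRV X ω} := by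
        ext ω
        simp only [Set.mem_setOf_eq]
        rw [hydef, div_lt_iff₀ hc0, mul_comm]
      rw [hseteq]
    have hDi : ∀ i, tailP μ (fun ω => c 0 * X i ω) x = (μ {ω | y < X i ω}).toReal := by
      intro i
      show (μ {ω | x < c 0 * X i ω}).toReal = _
      have hseteq : {ω | x < c 0 * X i ω} = {ω | y < X i ω} := by
        ext ω
        simp only [Set.mem_setOf_eq]
        rw [hydef, div_lt_iff₀ hc0, mul_comm]
      rw [hseteq]
    set Sy : ℝ := ∑ i : Fin n, (μ {ω | y < X i ω}).toReal with hSdef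
    have hDsum : ∑ i : Fin n, tailP μ (fun ω => c 0 * X i ω) x = Sy :=
      Finset.sum_congr rfl fun i _ => hDi i
    have hsetmax : {ω | y < maxRV X ω}
        = ⋃ i ∈ (Finset.univ : Finset (Fin n)), {ω | y < X i ω} := by
      ext ω
      simp only [Set.mem_setOf_eq, Set.mem_iUnion, Finset.mem_univ, exists_prop, true_and]
      constructor
      · intro hω
        exact WOS.exists_gt_of_lt_maxRV X ω hω
      · rintro ⟨i, hi⟩
        exact lt_of_lt_of_le hi ((WOS.maxRV_eq X ω) ▸ WOS.le_ordDesc_zero X ω i)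
    have hTleS : T y ≤ Sy := by
      rw [hTdef, hsetmax]
      exact WOS.preal_biUnion_le μ _ _
    have hq2sum : ∑ i : Fin n, ∑ j ∈ Finset.univ.erase i,
        (μ {ω | L * h y < X i ω ∧ L * h y < X j ω}).toReal = Q2 y * T y := by
      rw [hQ2def]
      rw [Finset.sum_mul]
      refine Finset.sum_congr rfl fun i _ => ?_
      rw [Finset.sum_mul]
      exact Finset.sum_congr rfl fun j _ => (div_mul_cancel₀ _ (ne_of_gt hTy)).symm
    have hA : ∀ i, MeasurableSet {ω | y < X i ω} :=
      fun i => measurableSet_lt measurable_const (hXm i)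
    have hIE := WOS.preal_sum_le_union_add μ Finset.univ (fun i => {ω | y < X i ω}) hA
    rw [← hsetmax] at hIE
    have hpair : ∑ i : Fin n, ∑ j ∈ Finset.univ.erase i,
        (μ ({ω | y < X i ω} ∩ {ω | y < X j ω})).toReal ≤ Q2 y * T y := by
      rw [← hq2sum]
      refine Finset.sum_le_sum fun i _ => Finset.sum_le_sum fun j _ => ?_
      refine WOS.preal_mono μ ?_
      rintro ω ⟨h1, h2⟩
      simp only [Set.mem_setOf_eq] at h1 h2 ⊢
      exact ⟨lt_trans hLhy h1, lt_trans hLhy h2⟩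
    have hQ2y' : Q2 y < ε' := lt_of_le_of_lt (le_abs_self _) hQ2y
    have hm2 : Q2 y * T y < ε' * T y := mul_lt_mul_of_pos_right hQ2y' hTy
    have hIE' : Sy ≤ T y + ∑ i : Fin n, ∑ j ∈ Finset.univ.erase i,
        (μ ({ω | y < X i ω} ∩ {ω | y < X j ω})).toReal := by
      beta_reduce at hIE
      rw [hSdef, hTdef]
      exact hIE
    have hSub : Sy ≤ T y + ε' * T y := by
      linarith only [hIE', hpair, hm2]
    have hSpos : 0 < Sy := lt_of_lt_of_le hTy hTleS
    have hub : T y / Sy ≤ 1 := (div_le_one hSpos).mpr hTleS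
    have hlb : 1 - ε' ≤ T y / Sy := by
      rw [le_div_iff₀ hSpos]
      have h1 : 0 ≤ 1 - ε' := by linarith only [hε'le]
      have h2 : (1 - ε') * Sy ≤ (1 - ε') * ((1 + ε') * T y) :=
        mul_le_mul_of_nonneg_left (by linarith only [hSub]) h1
      have h3 : (1 - ε') * ((1 + ε') * T y) = T y - ε' * ε' * T y := by ring
      have h4 : 0 ≤ ε' * ε' * T y := by positivity
      linarith only [h2, h3, h4]
    rw [hD, hDsum]
    simp only [Pi.one_apply, Real.dist_eq]
    rw [abs_lt]
    constructor
    · linarith only [hub, hlb, hε, hε'le2]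
    · linarith only [hub, hlb, hε, hε'le2]
end

section
/- Let X_1,...,X_n be n real-valued (possibly dependent) random variables with order statistics X_{1:n} ≤ ... ≤ X_{n:n}, and suppose Assumption C holds: the distribution function of X_{n:n} is both long-tailed and dominatedly varying (X_{n:n} ∈ 𝓛 ∩ 𝓓), and there exists a dominatedly varying function h ∈ 𝓗_{X_{n:n}} such that condition (DS1) holds for every t > 0. Then for any 0 < a ≤ b < ∞ and 0 ≤ d < ∞, the relation P(∑_{i=0}^{n-1} c_i X_{n-i:n} > x) ~ P(c_0 X_{n:n} > x) ~ ∑_{i=1}^{n} P(c_0 X_i > x) as x → ∞ holds uniformly for (c_0, c_1, ..., c_{n-1}) ∈ [a,b] × [0,d]^{n-1}. -/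
open MeasureTheory Filter Topology Asymptotics

namespace OrdAux

variable {Ω : Type*} {n : ℕ} (X : Fin n → Ω → ℝ) (ω : Ω)

/-- the sorted (descending) list of values -/
noncomputable def sl : List ℝ := (List.ofFn fun j => X j ω).mergeSort fun a b => decide (b ≤ a)

lemma sl_perm : (sl X ω).Perm (List.ofFn fun j => X j ω) := List.mergeSort_perm _ _

lemma sl_length : (sl X ω).length = n := by
  rw [sl, List.length_mergeSort, List.length_ofFn]

lemma sl_sorted : (sl X ω).Pairwise (fun a b : ℝ => b ≤ a) := by
  have := List.pairwise_mergeSort (le := fun a b : ℝ => decide (b ≤ a))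
    (fun a b c hab hbc => by simp at hab hbc ⊢; exact hbc.trans hab)
    (fun a b => by simp [le_total]) (List.ofFn fun j => X j ω)
  exact List.Pairwise.imp (fun h => by simpa using h) this

lemma mem_sl_iff {v : ℝ} : v ∈ sl X ω ↔ ∃ j, X j ω = v := by
  rw [(sl_perm X ω).mem_iff, List.mem_ofFn]

lemma ordDesc_eq_get (i : Fin n) :
    ordDesc X i ω = (sl X ω)[(i : ℕ)]'(by rw [sl_length]; exact i.2) := by
  rw [ordDesc]
  exact List.getD_eq_getElem _ _ _

lemma ordDesc_exists (i : Fin n) : ∃ j, X j ω = ordDesc X i ω := by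
  rw [← mem_sl_iff, ordDesc_eq_get]
  exact List.getElem_mem _

lemma ordDesc_anti {i k : Fin n} (hik : i ≤ k) : ordDesc X k ω ≤ ordDesc X i ω := by
  rcases eq_or_lt_of_le hik with rfl | hlt
  · exact le_refl _
  · rw [ordDesc_eq_get, ordDesc_eq_get]
    have := List.pairwise_iff_get.mp (sl_sorted X ω)
      ⟨i, by rw [sl_length]; exact i.2⟩ ⟨k, by rw [sl_length]; exact k.2⟩
      (by simpa [Fin.mk_lt_mk] using (Fin.lt_def.mp hlt))
    simpa [List.get_eq_getElem] using this

lemma le_ordDesc_zero [NeZero n] {v : ℝ} (hv : v ∈ sl X ω) : v ≤ ordDesc X 0 ω := by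
  rw [List.mem_iff_get] at hv
  obtain ⟨m, rfl⟩ := hv
  rcases Nat.eq_zero_or_pos (m : ℕ) with hm | hm
  · rw [ordDesc_eq_get]
    simp [List.get_eq_getElem, hm]
  · have := List.pairwise_iff_get.mp (sl_sorted X ω)
      ⟨0, by rw [sl_length]; exact Nat.pos_of_ne_zero (NeZero.ne n)⟩ m (by exact Fin.lt_def.mpr hm)
    rw [ordDesc_eq_get]
    simpa [List.get_eq_getElem, Fin.val_zero] using this

lemma ordDesc_zero [NeZero n] : ordDesc X 0 ω = maxRV X ω := by
  have hb : BddAbove (Set.range fun j => X j ω) := (Set.finite_range _).bddAbove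
  apply le_antisymm
  · obtain ⟨j, hj⟩ := ordDesc_exists X ω 0
    rw [← hj]
    exact le_ciSup hb j
  · exact ciSup_le fun j => le_ordDesc_zero X ω ((mem_sl_iff X ω).mpr ⟨j, rfl⟩)

lemma ordDesc_le_max [NeZero n] (i : Fin n) : ordDesc X i ω ≤ maxRV X ω := by
  rw [← ordDesc_zero]
  exact ordDesc_anti X ω (Fin.zero_le i)

/-- countP of an ofFn list equals a filter-card. -/
lemma countP_ofFn {m : ℕ} (f : Fin m → ℝ) (p : ℝ → Bool) :
    (List.ofFn f).countP p = (Finset.univ.filter (fun j => p (f j) = true)).card := by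
  induction m with
  | zero => simp
  | succ k ih =>
      rw [List.ofFn_succ, List.countP_cons, ih]
      rw [Finset.card_filter, Finset.card_filter, Fin.sum_univ_succ]
      simp [add_comm]

lemma countP_sl (p : ℝ → Bool) :
    (sl X ω).countP p = (Finset.univ.filter (fun j => p (X j ω) = true)).card := by
  rw [(sl_perm X ω).countP_eq, countP_ofFn]

/-- if at most one index has `β < |X j ω|` (β ≥ 0) then all order stats except the top
are at most β -/
lemma ordDesc_le_of_unique [NeZero n] {β : ℝ} (hβ : 0 ≤ β)
    (huniq : ∀ j k : Fin n, β < |X j ω| → β < |X k ω| → j = k)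
    {i : Fin n} (hi : i ≠ 0) : ordDesc X i ω ≤ β := by
  by_contra hcon
  push_neg at hcon
  -- positions 0 and i in the sorted list both exceed β
  have h0 : β < ordDesc X 0 ω := lt_of_lt_of_le hcon (ordDesc_anti X ω (Fin.zero_le i))
  set p : ℝ → Bool := fun z => decide (β < z) with hp
  have hcount : 2 ≤ (sl X ω).countP p := by
    have hlen : (sl X ω).length = n := sl_length X ω
    have : sl X ω = List.ofFn (fun k : Fin (sl X ω).length => (sl X ω)[(k : ℕ)]) := by
      simpa [List.get_eq_getElem] using (List.ofFn_get (sl X ω)).symm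
    calc (2 : ℕ) = ({(⟨0, by rw [hlen]; exact Nat.pos_of_ne_zero (NeZero.ne n)⟩ : Fin (sl X ω).length),
            ⟨i, by rw [hlen]; exact i.2⟩} : Finset (Fin (sl X ω).length)).card := by
            rw [Finset.card_pair]
            intro hcontra
            apply hi
            have := congrArg Fin.val hcontra
            simp at this
            exact Fin.ext this.symm
      _ ≤ (Finset.univ.filter (fun k : Fin (sl X ω).length =>
              p ((sl X ω)[(k : ℕ)]) = true)).card := by
            apply Finset.card_le_card
            intro k hk
            simp only [Finset.mem_insert, Finset.mem_singleton] at hk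
            rcases hk with rfl | rfl
            · simp only [Finset.mem_filter, Finset.mem_univ, true_and, hp,
                decide_eq_true_eq]
              have h0' := h0
              rw [ordDesc_eq_get] at h0'
              simpa using h0'
            · simp only [Finset.mem_filter, Finset.mem_univ, true_and, hp,
                decide_eq_true_eq]
              have hcon' := hcon
              rw [ordDesc_eq_get] at hcon'
              simpa using hcon'
      _ = (List.ofFn (fun k : Fin (sl X ω).length => (sl X ω)[(k : ℕ)])).countP p := by
            rw [countP_ofFn]
      _ = (sl X ω).countP p := by rw [← this]
  have hcard : (Finset.univ.filter (fun j : Fin n => p (X j ω) = true)).card ≤ 1 := by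
    apply Finset.card_le_one.mpr
    intro j hj k hk
    simp only [Finset.mem_filter, hp, decide_eq_true_eq] at hj hk
    exact huniq j k (lt_of_lt_of_le hj.2 (le_abs_self _)) (lt_of_lt_of_le hk.2 (le_abs_self _))
  rw [countP_sl] at hcount
  omega

/-- if some X j* exceeds β and all others are ≤ β in absolute value then all order
stats except the top are ≤ β in absolute value. -/
lemma abs_ordDesc_le [NeZero n] {β : ℝ} (hβ : 0 ≤ β) {js : Fin n}
    (hbig : β < X js ω) (hsmall : ∀ i, i ≠ js → |X i ω| ≤ β)
    {i : Fin n} (hi : i ≠ 0) : |ordDesc X i ω| ≤ β := by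
  have huniq : ∀ j k : Fin n, β < |X j ω| → β < |X k ω| → j = k := by
    intro j k hj hk
    have hjj : j = js := by
      by_contra hne; exact absurd (hsmall j hne) (not_le.mpr hj)
    have hkk : k = js := by
      by_contra hne; exact absurd (hsmall k hne) (not_le.mpr hk)
    rw [hjj, hkk]
  have hub : ordDesc X i ω ≤ β := ordDesc_le_of_unique X ω hβ huniq hi
  rw [abs_le]
  refine ⟨?_, hub⟩
  by_contra hcon
  push_neg at hcon
  obtain ⟨j, hj⟩ := ordDesc_exists X ω i
  have habs : β < |X j ω| := by
    rw [hj]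
    calc β < -(ordDesc X i ω) := by linarith
      _ ≤ |ordDesc X i ω| := neg_le_abs _
  have : j = js := by
    by_contra hne; exact absurd (hsmall j hne) (not_le.mpr habs)
  rw [this] at hj
  have : (0:ℝ) < X js ω := lt_of_le_of_lt hβ hbig
  rw [hj] at this
  linarith

end OrdAux

namespace MAux

variable {Ω : Type*} [MeasurableSpace Ω] {μ : Measure Ω}

/-- Bonferroni inequality, ordered-pairs form, in ℝ≥0∞. -/
lemma bonferroni {ι : Type*} [DecidableEq ι] (A : ι → Set Ω) (hA : ∀ i, MeasurableSet (A i))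
    (s : Finset ι) :
    ∑ i ∈ s, μ (A i) ≤ μ (⋃ i ∈ s, A i) + ∑ p ∈ s.offDiag, μ (A p.1 ∩ A p.2) := by
  induction s using Finset.induction_on with
  | empty => simp
  | @insert k s hk ih =>
      rw [Finset.sum_insert hk, Finset.offDiag_insert hk]
      have hdisj1 : Disjoint (s.offDiag ∪ {k} ×ˢ s) (s ×ˢ {k}) := by
        rw [Finset.disjoint_left]
        rintro ⟨p1, p2⟩ hp hq
        simp only [Finset.mem_union, Finset.mem_offDiag, Finset.mem_product,
          Finset.mem_singleton] at hp hq
        rcases hp with ⟨-, h2, -⟩ | ⟨-, h2⟩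
        · exact hk (hq.2 ▸ h2)
        · exact hk (hq.2 ▸ h2)
      have hdisj2 : Disjoint (s.offDiag) ({k} ×ˢ s) := by
        rw [Finset.disjoint_left]
        rintro ⟨p1, p2⟩ hp hq
        simp only [Finset.mem_offDiag, Finset.mem_product, Finset.mem_singleton] at hp hq
        exact hk (hq.1 ▸ hp.1)
      rw [Finset.sum_union hdisj1, Finset.sum_union hdisj2]
      have e1 : ∑ p ∈ {k} ×ˢ s, μ (A p.1 ∩ A p.2) = ∑ j ∈ s, μ (A k ∩ A j) := by
        rw [Finset.sum_product, Finset.sum_singleton]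
      have e2 : ∑ p ∈ s ×ˢ {k}, μ (A p.1 ∩ A p.2) = ∑ j ∈ s, μ (A j ∩ A k) := by
        rw [Finset.sum_product]
        simp
      rw [e1, e2]
      have hcap : μ (A k ∩ ⋃ j ∈ s, A j) ≤ ∑ j ∈ s, μ (A k ∩ A j) := by
        rw [Set.inter_iUnion₂]
        exact measure_biUnion_finset_le s _
      have hkey : μ (A k) + μ (⋃ j ∈ s, A j) =
          μ (A k ∪ ⋃ j ∈ s, A j) + μ (A k ∩ ⋃ j ∈ s, A j) := by
        exact (measure_union_add_inter _ (MeasurableSet.biUnion s.countable_toSet fun j _ => hA j)).symm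
      have hU : (⋃ i ∈ insert k s, A i) = A k ∪ ⋃ j ∈ s, A j := by
        simp [Set.biUnion_insert]
      rw [hU]
      calc μ (A k) + ∑ i ∈ s, μ (A i)
          ≤ μ (A k) + (μ (⋃ j ∈ s, A j) + ∑ p ∈ s.offDiag, μ (A p.1 ∩ A p.2)) := by
            exact add_le_add_right ih _
        _ = (μ (A k) + μ (⋃ j ∈ s, A j)) + ∑ p ∈ s.offDiag, μ (A p.1 ∩ A p.2) := by ring
        _ = (μ (A k ∪ ⋃ j ∈ s, A j) + μ (A k ∩ ⋃ j ∈ s, A j)) + ∑ p ∈ s.offDiag, μ (A p.1 ∩ A p.2) := by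
            rw [hkey]
        _ ≤ (μ (A k ∪ ⋃ j ∈ s, A j) + ∑ j ∈ s, μ (A k ∩ A j)) + ∑ p ∈ s.offDiag, μ (A p.1 ∩ A p.2) := by
            exact add_le_add_left (add_le_add_right hcap _) _
        _ ≤ μ (A k ∪ ⋃ j ∈ s, A j) + (∑ p ∈ s.offDiag, μ (A p.1 ∩ A p.2) + ∑ j ∈ s, μ (A k ∩ A j)
              + ∑ j ∈ s, μ (A j ∩ A k)) := by
            rw [add_assoc]
            refine add_le_add_right ?_ _
            exact le_add_right (le_of_eq (add_comm _ _))

variable {n : ℕ}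

lemma tailP_nonneg {Y : Ω → ℝ} {x : ℝ} : 0 ≤ tailP μ Y x := ENNReal.toReal_nonneg

lemma tailP_anti [IsFiniteMeasure μ] {Y : Ω → ℝ} : Antitone (tailP μ Y) := by
  intro x y hxy
  exact ENNReal.toReal_mono (measure_ne_top μ _)
    (measure_mono fun ω h => lt_of_le_of_lt hxy h)

lemma tailP_smul {Y : Ω → ℝ} {c x : ℝ} (hc : 0 < c) :
    tailP μ (fun ω => c * Y ω) x = tailP μ Y (x / c) := by
  have hset : {ω | x < c * Y ω} = {ω | x / c < Y ω} := by
    ext ω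
    simp only [Set.mem_setOf_eq]
    rw [div_lt_iff₀ hc, mul_comm]
  rw [tailP, tailP, hset]

lemma max_set_eq [NeZero n] (X : Fin n → Ω → ℝ) (u : ℝ) :
    {ω | u < maxRV X ω} = ⋃ i, {ω | u < X i ω} := by
  ext ω
  simp only [maxRV, Set.mem_setOf_eq, Set.mem_iUnion]
  constructor
  · intro h
    exact exists_lt_of_lt_ciSup h
  · rintro ⟨i, hi⟩
    exact lt_of_lt_of_le hi (le_ciSup (f := fun k => X k ω) (Set.finite_range _).bddAbove i)

lemma exists_eventually_scale {f g : ℝ → ℝ}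
    (hpos : (0 : EReal) < atTop.liminf fun x => ((f x / g x : ℝ) : EReal))
    (hg : ∀ᶠ x in atTop, 0 < g x) :
    ∃ m : ℝ, 0 < m ∧ ∀ᶠ x in atTop, m * g x ≤ f x := by
  obtain ⟨z, hz0, hzl⟩ := exists_between hpos
  have hzt : z ≠ ⊤ := (hzl.trans_le le_top).ne
  have hzb : z ≠ ⊥ := (lt_trans (by simp) hz0).ne'
  lift z to ℝ using ⟨hzt, hzb⟩ with m
  refine ⟨m, by exact_mod_cast hz0, ?_⟩
  have hev := eventually_lt_of_lt_liminf hzl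
  filter_upwards [hev, hg] with x hx hgx
  have hmx : m < f x / g x := by exact_mod_cast hx
  have := (lt_div_iff₀ hgx).mp hmx
  linarith

lemma pair_tendsto_of_DS1 [IsFiniteMeasure μ] [NeZero n] {X : Fin n → Ω → ℝ} {h : ℝ → ℝ}
    (hTpos : ∀ x, 0 < tailP μ (maxRV X) x)
    (hhpos : ∀ᶠ x in atTop, 0 < h x)
    (hho : h =o[atTop] fun x : ℝ => x)
    (hDS1' : ∀ i j : Fin n, i ≠ j →
      Tendsto (fun x => (μ {ω | 1 * h x < |X i ω| ∧ x < X j ω}).toReal / tailP μ (maxRV X) x)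
        atTop (𝓝 0))
    {i j : Fin n} (hij : i ≠ j) :
    Tendsto (fun u => (μ {ω | u < X i ω ∧ u < X j ω}).toReal / tailP μ (maxRV X) u)
      atTop (𝓝 0) := by
  have hb := (Asymptotics.isLittleO_iff.mp hho) (by norm_num : (0:ℝ) < 1/2)
  apply tendsto_of_tendsto_of_tendsto_of_le_of_le' tendsto_const_nhds (hDS1' i j hij)
  · filter_upwards with u
    exact div_nonneg ENNReal.toReal_nonneg (le_of_lt (hTpos u))
  · filter_upwards [hhpos, hb, eventually_gt_atTop (0:ℝ)] with u hpos hbu hu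
    gcongr
    · exact le_of_lt (hTpos u)
    · exact measure_ne_top μ _
    · have h1 : h u ≤ u / 2 := by
        calc h u ≤ |h u| := le_abs_self _
          _ ≤ 1/2 * |u| := hbu
          _ = u / 2 := by rw [abs_of_pos hu]; ring
      linarith
    · exact le_abs_self _



lemma T_div_S_tendsto [IsProbabilityMeasure μ] [NeZero n] {X : Fin n → Ω → ℝ}
    (hXm : ∀ i, Measurable (X i))
    (hTpos : ∀ x, 0 < tailP μ (maxRV X) x)
    (hpair : ∀ i j : Fin n, i ≠ j →
      Tendsto (fun u => (μ {ω | u < X i ω ∧ u < X j ω}).toReal / tailP μ (maxRV X) u)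
        atTop (𝓝 0)) :
    Tendsto (fun u => tailP μ (maxRV X) u / ∑ i, tailP μ (X i) u) atTop (𝓝 1) := by
  set T := tailP μ (maxRV X) with hT
  set S : ℝ → ℝ := fun u => ∑ i, tailP μ (X i) u with hS
  have hTleS : ∀ u, T u ≤ S u := by
    intro u
    have h1 : μ {ω | u < maxRV X ω} ≤ ∑ i, μ {ω | u < X i ω} := by
      rw [max_set_eq X u]
      exact (measure_iUnion_fintype_le μ _)
    have h2 : (∑ i, μ {ω | u < X i ω}).toReal = S u := by
      rw [ENNReal.toReal_sum (fun i _ => measure_ne_top μ _)]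
      rfl
    calc T u ≤ (∑ i, μ {ω | u < X i ω}).toReal := by
          refine ENNReal.toReal_mono ?_ h1
          exact (ENNReal.sum_lt_top.mpr (fun i _ => measure_lt_top μ _)).ne
      _ = S u := h2
  have hSpos : ∀ u, 0 < S u := fun u => lt_of_lt_of_le (hTpos u) (hTleS u)
  have hSleT : ∀ u, S u ≤ T u +
      ∑ p ∈ Finset.univ.offDiag, (μ ({ω | u < X p.1 ω} ∩ {ω | u < X p.2 ω})).toReal := by
    intro u
    have hbon := bonferroni (μ := μ) (fun i : Fin n => {ω | u < X i ω})
      (fun i => measurableSet_lt measurable_const (hXm i)) Finset.univ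
    have hU : (⋃ i ∈ Finset.univ, {ω | u < X i ω}) = {ω | u < maxRV X ω} := by
      rw [max_set_eq X u]
      simp
    rw [hU] at hbon
    have hfin : μ {ω | u < maxRV X ω} +
        ∑ p ∈ Finset.univ.offDiag, μ ({ω | u < X p.1 ω} ∩ {ω | u < X p.2 ω}) ≠ ⊤ := by
      refine ENNReal.add_ne_top.mpr ⟨measure_ne_top μ _, ?_⟩
      exact (ENNReal.sum_lt_top.mpr (fun p _ => measure_lt_top μ _)).ne
    have := ENNReal.toReal_mono hfin hbon
    rw [ENNReal.toReal_sum (fun i _ => measure_ne_top μ _)] at this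
    rw [ENNReal.toReal_add (measure_ne_top μ _)
      ((ENNReal.sum_lt_top.mpr (fun p _ => measure_lt_top μ _)).ne),
      ENNReal.toReal_sum (fun p _ => measure_ne_top μ _)] at this
    exact this
  have hStendsto : Tendsto (fun u => S u / T u) atTop (𝓝 1) := by
    have hup : Tendsto (fun u => 1 + ∑ p ∈ Finset.univ.offDiag,
        (μ ({ω | u < X p.1 ω} ∩ {ω | u < X p.2 ω})).toReal / T u) atTop (𝓝 1) := by
      have : Tendsto (fun u => ∑ p ∈ Finset.univ.offDiag,
          (μ ({ω | u < X p.1 ω} ∩ {ω | u < X p.2 ω})).toReal / T u) atTop (𝓝 0) := by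
        have h0 : (0:ℝ) = ∑ p ∈ (Finset.univ.offDiag : Finset (Fin n × Fin n)), (0:ℝ) := by simp
        rw [h0]
        refine tendsto_finset_sum _ (fun p hp => ?_)
        have hne : p.1 ≠ p.2 := (Finset.mem_offDiag.mp hp).2.2
        have hseq : (fun u => (μ ({ω | u < X p.1 ω} ∩ {ω | u < X p.2 ω})).toReal / T u)
            = fun u => (μ {ω | u < X p.1 ω ∧ u < X p.2 ω}).toReal / T u := by
          funext u
          rw [Set.setOf_and]
        rw [hseq]
        exact hpair p.1 p.2 hne
      have := this.const_add (1:ℝ)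
      simpa using this
    apply tendsto_of_tendsto_of_tendsto_of_le_of_le' tendsto_const_nhds hup
    · filter_upwards with u
      exact (le_div_iff₀ (hTpos u)).mpr (by simpa using hTleS u)
    · filter_upwards with u
      rw [div_le_iff₀ (hTpos u), add_mul, one_mul, Finset.sum_mul]
      calc S u ≤ T u + ∑ p ∈ Finset.univ.offDiag,
            (μ ({ω | u < X p.1 ω} ∩ {ω | u < X p.2 ω})).toReal := hSleT u
        _ ≤ T u + ∑ p ∈ Finset.univ.offDiag,
            (μ ({ω | u < X p.1 ω} ∩ {ω | u < X p.2 ω})).toReal / T u * T u := by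
            gcongr with p hp
            rw [div_mul_cancel₀]
            exact (hTpos u).ne'
  have := hStendsto.inv₀ (by norm_num)
  simp only [inv_div, inv_one] at this
  exact this

end MAux

namespace MAux2

open Filter MeasureTheory Topology

lemma sum_erase_le {n : ℕ} [NeZero n] (c r : Fin n → ℝ) {d γ : ℝ} (hd : 0 ≤ d) (hγ : 0 ≤ γ)
    (hc : ∀ i : Fin n, i ≠ 0 → 0 ≤ c i ∧ c i ≤ d) (hr : ∀ i : Fin n, i ≠ 0 → r i ≤ γ) :
    ∑ i ∈ Finset.univ.erase 0, c i * r i ≤ (n : ℝ) * (d * γ) := by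
  have h1 : ∑ i ∈ Finset.univ.erase 0, c i * r i ≤ ∑ _i ∈ Finset.univ.erase (0 : Fin n), d * γ := by
    refine Finset.sum_le_sum fun i hi => ?_
    have hi0 : i ≠ 0 := (Finset.mem_erase.mp hi).1
    calc c i * r i ≤ c i * γ := mul_le_mul_of_nonneg_left (hr i hi0) (hc i hi0).1
      _ ≤ d * γ := mul_le_mul_of_nonneg_right (hc i hi0).2 hγ
  have h2 : ∑ _i ∈ Finset.univ.erase (0 : Fin n), (d * γ)
      = ((Finset.univ.erase (0 : Fin n)).card : ℝ) * (d * γ) := by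
    rw [Finset.sum_const, nsmul_eq_mul]
  have h3 : ((Finset.univ.erase (0 : Fin n)).card : ℝ) ≤ (n : ℝ) := by
    have hcard : (Finset.univ.erase (0 : Fin n)).card ≤ n := by
      calc (Finset.univ.erase (0 : Fin n)).card ≤ (Finset.univ : Finset (Fin n)).card :=
            Finset.card_erase_le
        _ = n := by simp
    exact_mod_cast hcard
  calc ∑ i ∈ Finset.univ.erase 0, c i * r i
      ≤ ((Finset.univ.erase (0 : Fin n)).card : ℝ) * (d * γ) := by rw [← h2]; exact h1
    _ ≤ (n : ℝ) * (d * γ) := mul_le_mul_of_nonneg_right h3 (by positivity)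

lemma unif_aux {n : ℕ} [NeZero n] {a b : ℝ} (ha : 0 < a) (hab : a ≤ b)
    (F : ℝ → (Fin n → ℝ) → ℝ) (K : Set (Fin n → ℝ))
    (hK : ∀ c ∈ K, a ≤ c 0 ∧ c 0 ≤ b)
    (hbound : ∀ ε : ℝ, 0 < ε → ∃ U : ℝ, ∀ x : ℝ, ∀ c ∈ K, U ≤ x / c 0 → |1 - F x c| < ε) :
    TendstoUniformlyOn F 1 atTop K := by
  rw [Metric.tendstoUniformlyOn_iff]
  intro ε hε
  obtain ⟨U, hU⟩ := hbound ε hε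
  have hb : 0 < b := lt_of_lt_of_le ha hab
  filter_upwards [eventually_ge_atTop (b * max U 0)] with x hx
  intro c hc
  have hc0 : 0 < c 0 := lt_of_lt_of_le ha (hK c hc).1
  have hx0 : 0 ≤ x := le_trans (by positivity) hx
  have h1 : max U 0 ≤ x / b := (le_div_iff₀ hb).mpr (by linarith [mul_comm (max U 0) b])
  have h2 : x / b ≤ x / c 0 := div_le_div_of_nonneg_left hx0 hc0 (hK c hc).2
  have hxU : U ≤ x / c 0 := le_trans (le_trans (le_max_left U 0) h1) h2
  have := hU x c hc hxU
  simpa [Real.dist_eq, Pi.one_apply] using this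

end MAux2

set_option maxHeartbeats 2000000 in
/-- Theorem 3.1 under Assumption C. -/
theorem weighted_order_stats_tail_assumptionC
    {Ω : Type*} [MeasurableSpace Ω] (μ : Measure Ω) [IsProbabilityMeasure μ]
    {n : ℕ} [NeZero n] (X : Fin n → Ω → ℝ) (hXm : ∀ i, Measurable (X i))
    (hC : AssumptionC μ X)
    (a b d : ℝ) (ha : 0 < a) (hab : a ≤ b) (hd : 0 ≤ d) :
    UnifMaxSum μ X
      {c : Fin n → ℝ | c 0 ∈ Set.Icc a b ∧ ∀ i : Fin n, i ≠ 0 → c i ∈ Set.Icc 0 d} := by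
  classical
  obtain ⟨⟨hT0, _hLT⟩, hTD, h, hhD, ⟨hhpos, hho, hhLT, _⟩, hDS1⟩ := hC
  set T : ℝ → ℝ := tailP μ (maxRV X) with hTdef
  have hb : 0 < b := lt_of_lt_of_le ha hab
  have hTpos : ∀ x : ℝ, 0 < T x := by
    intro x
    rcases le_total 0 x with hx | hx
    · exact hT0 x hx
    · exact lt_of_lt_of_le (hT0 0 le_rfl) (MAux.tailP_anti hx)
  set K : Set (Fin n → ℝ) :=
    {c : Fin n → ℝ | c 0 ∈ Set.Icc a b ∧ ∀ i : Fin n, i ≠ 0 → c i ∈ Set.Icc 0 d} with hKdef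
  have hKab : ∀ c ∈ K, a ≤ c 0 ∧ c 0 ≤ b := fun c hc => ⟨hc.1.1, hc.1.2⟩
  -- pairwise joint tails are negligible
  have hpair : ∀ i j : Fin n, i ≠ j →
      Tendsto (fun u => (μ {ω | u < X i ω ∧ u < X j ω}).toReal / T u) atTop (𝓝 0) :=
    fun i j hij => MAux.pair_tendsto_of_DS1 hTpos hhpos hho (hDS1 1 one_pos) hij
  constructor
  · -- first component
    apply MAux2.unif_aux ha hab _ K hKab
    intro ε hε
    -- constants
    set D1 : ℝ := n * d / a with hD1def
    have hD1 : 0 ≤ D1 := by positivity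
    have hden1 : (0:ℝ) < b + n * d + 1 := by positivity
    set κ : ℝ := a / (b + n * d + 1) with hκdef
    have hκpos : 0 < κ := div_pos ha hden1
    -- dominated-variation constants
    obtain ⟨m, hm0, hmev⟩ := MAux.exists_eventually_scale
      (hhD (1/κ) (one_div_pos.mpr hκpos)).1 hhpos
    obtain ⟨m', hm'0, hm'ev⟩ := MAux.exists_eventually_scale
      (hTD (1/κ) (one_div_pos.mpr hκpos)).1 (Eventually.of_forall fun x => hTpos x)
    have htendκ : Tendsto (fun u : ℝ => κ * u) atTop atTop :=
      Tendsto.const_mul_atTop hκpos tendsto_id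
    -- eventual conditions, all as functions of u
    have hE1 : ∀ᶠ u : ℝ in atTop, 0 < h u := hhpos
    have hE2 : ∀ᶠ u : ℝ in atTop, |h u| ≤ 1/2 * |u| := by
      have := (Asymptotics.isLittleO_iff.mp hho) (by norm_num : (0:ℝ) < 1/2)
      filter_upwards [this] with u hu
      simpa [Real.norm_eq_abs] using hu
    have hE3 : ∀ᶠ u : ℝ in atTop, (0:ℝ) < u := eventually_gt_atTop 0
    have hE4 : ∀ᶠ u : ℝ in atTop, m * h (κ * u) ≤ h u := by
      have h2 := htendκ.eventually hmev
      filter_upwards [h2] with u hu2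
      have heq : κ * u * (1/κ) = u := by field_simp
      rwa [heq] at hu2
    have hE5 : ∀ᶠ u : ℝ in atTop, m' * T (κ * u) ≤ T u := by
      have h2 := htendκ.eventually hm'ev
      filter_upwards [h2] with u hu2
      have heq : κ * u * (1/κ) = u := by field_simp
      rwa [heq] at hu2
    have hE6 : ∀ᶠ u : ℝ in atTop, |T (u + D1 * h u) / T u - 1| < ε/3 := by
      have h1 : Tendsto (fun u => |T (u + D1 * h u) / T u - 1|) atTop (𝓝 0) := by
        simpa using ((hhLT D1).sub_const 1).abs
      exact h1.eventually_lt_const (by positivity)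
    have hE7 : ∀ᶠ u : ℝ in atTop, |T (u + (-D1) * h u) / T u - 1| < ε/3 := by
      have h1 : Tendsto (fun u => |T (u + (-D1) * h u) / T u - 1|) atTop (𝓝 0) := by
        simpa using ((hhLT (-D1)).sub_const 1).abs
      exact h1.eventually_lt_const (by positivity)
    have hE8 : ∀ᶠ u : ℝ in atTop, ∑ p ∈ (Finset.univ.offDiag : Finset (Fin n × Fin n)),
        (μ {ω | m * h (κ * u) < |X p.1 ω| ∧ κ * u < X p.2 ω}).toReal / T (κ * u)
        < ε/3 * m' := by
      have hsum : Tendsto (fun w => ∑ p ∈ (Finset.univ.offDiag : Finset (Fin n × Fin n)),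
          (μ {ω | m * h w < |X p.1 ω| ∧ w < X p.2 ω}).toReal / T w) atTop (𝓝 0) := by
        have h0 : (0:ℝ) = ∑ _p ∈ (Finset.univ.offDiag : Finset (Fin n × Fin n)), (0:ℝ) := by
          simp
        rw [h0]
        exact tendsto_finset_sum _ fun p hp =>
          hDS1 m hm0 p.1 p.2 (Finset.mem_offDiag.mp hp).2.2
      have hcomp := hsum.comp htendκ
      exact hcomp.eventually_lt_const (by positivity)
    have hE9 : ∀ᶠ u : ℝ in atTop, ∑ p ∈ (Finset.univ.offDiag : Finset (Fin n × Fin n)),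
        (μ {ω | 1 * h u < |X p.1 ω| ∧ u < X p.2 ω}).toReal / T u < ε/3 := by
      have hsum : Tendsto (fun u => ∑ p ∈ (Finset.univ.offDiag : Finset (Fin n × Fin n)),
          (μ {ω | 1 * h u < |X p.1 ω| ∧ u < X p.2 ω}).toReal / T u) atTop (𝓝 0) := by
        have h0 : (0:ℝ) = ∑ _p ∈ (Finset.univ.offDiag : Finset (Fin n × Fin n)), (0:ℝ) := by
          simp
        rw [h0]
        exact tendsto_finset_sum _ fun p hp =>
          hDS1 1 one_pos p.1 p.2 (Finset.mem_offDiag.mp hp).2.2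
      exact hsum.eventually_lt_const (by positivity)
    obtain ⟨U, hU⟩ := eventually_atTop.mp
      (((((((hE1.and hE2).and hE3).and hE4).and hE5).and hE6).and hE7).and (hE8.and hE9))
    refine ⟨U, fun x c hc hxU => ?_⟩
    obtain ⟨⟨⟨⟨⟨⟨⟨hc1, hc2⟩, hc3⟩, hc4⟩, hc5⟩, hc6⟩, hc7⟩, hc8, hc9⟩ := hU (x / c 0) hxU
    have hc0a : a ≤ c 0 := hc.1.1
    have hc0b : c 0 ≤ b := hc.1.2
    have hc0 : 0 < c 0 := lt_of_lt_of_le ha hc0a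
    have hcd : ∀ i : Fin n, i ≠ 0 → 0 ≤ c i ∧ c i ≤ d := fun i hi => ⟨(hc.2 i hi).1, (hc.2 i hi).2⟩
    set u : ℝ := x / c 0 with hudef
    have hxeq : x = u * c 0 := (div_mul_cancel₀ x hc0.ne').symm
    have hβ : 0 ≤ h u := le_of_lt hc1
    have hhalf : h u ≤ u / 2 := by
      calc h u ≤ |h u| := le_abs_self _
        _ ≤ 1/2 * |u| := hc2
        _ = u / 2 := by rw [abs_of_pos hc3]; ring
    -- denominator
    have hden : tailP μ (fun ω => c 0 * maxRV X ω) x = T u := MAux.tailP_smul hc0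
    rw [hden]
    set Num : ℝ := tailP μ (fun ω => ∑ i, c i * ordDesc X i ω) x with hNumdef
    -- UPPER BOUND
    have hincl_up : {ω | x < ∑ i, c i * ordDesc X i ω} ⊆
        {ω | u + (-D1) * h u < maxRV X ω} ∪
        ⋃ p ∈ (Finset.univ.offDiag : Finset (Fin n × Fin n)),
          {ω | m * h (κ * u) < |X p.1 ω| ∧ κ * u < X p.2 ω} := by
      intro ω hω
      simp only [Set.mem_setOf_eq] at hω
      by_cases hcase : ∀ j k : Fin n, h u < |X j ω| → h u < |X k ω| → j = k
      · left
        simp only [Set.mem_setOf_eq]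
        have hords : ∀ i : Fin n, i ≠ 0 → ordDesc X i ω ≤ h u :=
          fun i hi => OrdAux.ordDesc_le_of_unique X ω hβ hcase hi
        have hsplit : ∑ i, c i * ordDesc X i ω =
            c 0 * ordDesc X 0 ω + ∑ i ∈ Finset.univ.erase 0, c i * ordDesc X i ω :=
          (Finset.add_sum_erase _ _ (Finset.mem_univ 0)).symm
        have hsum_le : ∑ i ∈ Finset.univ.erase 0, c i * ordDesc X i ω ≤ (n:ℝ) * (d * h u) :=
          MAux2.sum_erase_le c (fun i => ordDesc X i ω) hd hβ hcd hords
        have k1 : x - (n:ℝ) * (d * h u) < ordDesc X 0 ω * c 0 := by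
          rw [hsplit] at hω
          nlinarith [hω, hsum_le]
        have k2 : (x - (n:ℝ) * (d * h u)) / c 0 < ordDesc X 0 ω := (div_lt_iff₀ hc0).mpr k1
        have k3 : (x - (n:ℝ) * (d * h u)) / c 0 = u - ((n:ℝ) * (d * h u)) / c 0 := by
          rw [sub_div]
        have k4 : ((n:ℝ) * (d * h u)) / c 0 ≤ ((n:ℝ) * (d * h u)) / a :=
          div_le_div_of_nonneg_left (by positivity) ha hc0a
        have k5 : ((n:ℝ) * (d * h u)) / a = D1 * h u := by
          rw [hD1def]
          field_simp
        rw [OrdAux.ordDesc_zero] at k2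
        linarith
      · push_neg at hcase
        obtain ⟨j, k, hj, hk, hjk⟩ := hcase
        -- the max is large
        have hMp : κ * u < max (maxRV X ω) 0 := by
          have hle0 : c 0 * ordDesc X 0 ω ≤ b * max (maxRV X ω) 0 := by
            calc c 0 * ordDesc X 0 ω ≤ c 0 * max (maxRV X ω) 0 :=
                  mul_le_mul_of_nonneg_left
                    (le_trans (OrdAux.ordDesc_le_max X ω 0) (le_max_left _ _)) (le_of_lt hc0)
              _ ≤ b * max (maxRV X ω) 0 :=
                  mul_le_mul_of_nonneg_right hc0b (le_max_right _ _)
          have hle1 : ∑ i ∈ Finset.univ.erase 0, c i * ordDesc X i ω ≤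
              (n:ℝ) * (d * max (maxRV X ω) 0) :=
            MAux2.sum_erase_le c (fun i => ordDesc X i ω) hd (le_max_right _ _) hcd
              (fun i _ => le_trans (OrdAux.ordDesc_le_max X ω i) (le_max_left _ _))
          have hsplit : ∑ i, c i * ordDesc X i ω =
              c 0 * ordDesc X 0 ω + ∑ i ∈ Finset.univ.erase 0, c i * ordDesc X i ω :=
            (Finset.add_sum_erase _ _ (Finset.mem_univ 0)).symm
          have hx1 : x < (b + (n:ℝ) * d + 1) * max (maxRV X ω) 0 := by
            rw [hsplit] at hω
            nlinarith [le_max_right (maxRV X ω) 0]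
          have hx2 : u * a ≤ x := by
            rw [hxeq]
            exact mul_le_mul_of_nonneg_left hc0a (le_of_lt hc3)
          rw [hκdef]
          rw [div_mul_eq_mul_div, div_lt_iff₀ hden1]
          nlinarith
        have hMv : κ * u < maxRV X ω := by
          rcases lt_max_iff.mp hMp with h' | h'
          · exact h'
          · exact absurd h' (not_lt.mpr (by positivity))
        obtain ⟨js, hjs⟩ := exists_lt_of_lt_ciSup (show κ * u < ⨆ i, X i ω from hMv)
        right
        have hchoice : ∃ i0 : Fin n, i0 ≠ js ∧ h u < |X i0 ω| := by
          by_cases hjjs : j = js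
          · exact ⟨k, by rw [← hjjs]; exact fun hcon => hjk hcon.symm, hk⟩
          · exact ⟨j, hjjs, hj⟩
        obtain ⟨i0, hi0ne, hi0⟩ := hchoice
        have hmem : ((i0, js) : Fin n × Fin n) ∈ Finset.univ.offDiag :=
          Finset.mem_offDiag.mpr ⟨Finset.mem_univ _, Finset.mem_univ _, hi0ne⟩
        exact Set.mem_biUnion hmem
          (⟨lt_of_le_of_lt hc4 hi0, hjs⟩ :
            _ ∈ {ω | m * h (κ * u) < |X (i0, js).1 ω| ∧ κ * u < X (i0, js).2 ω})
    have hup : Num / T u < 1 + (ε/3 + ε/3) := by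
      have h1 : μ {ω | x < ∑ i, c i * ordDesc X i ω} ≤
          μ {ω | u + (-D1) * h u < maxRV X ω} +
          ∑ p ∈ (Finset.univ.offDiag : Finset (Fin n × Fin n)),
            μ {ω | m * h (κ * u) < |X p.1 ω| ∧ κ * u < X p.2 ω} :=
        (measure_mono hincl_up).trans ((measure_union_le _ _).trans
          (add_le_add_right (measure_biUnion_finset_le _ _) _))
      have hfin : μ {ω | u + (-D1) * h u < maxRV X ω} +
          ∑ p ∈ (Finset.univ.offDiag : Finset (Fin n × Fin n)),
            μ {ω | m * h (κ * u) < |X p.1 ω| ∧ κ * u < X p.2 ω} ≠ ⊤ :=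
        ENNReal.add_ne_top.mpr ⟨measure_ne_top μ _,
          (ENNReal.sum_lt_top.mpr fun p _ => measure_lt_top μ _).ne⟩
      have h2 : Num ≤ T (u + (-D1) * h u) +
          ∑ p ∈ (Finset.univ.offDiag : Finset (Fin n × Fin n)),
            (μ {ω | m * h (κ * u) < |X p.1 ω| ∧ κ * u < X p.2 ω}).toReal := by
        have := ENNReal.toReal_mono hfin h1
        rwa [ENNReal.toReal_add (measure_ne_top μ _)
            ((ENNReal.sum_lt_top.mpr fun p _ => measure_lt_top μ _).ne),
          ENNReal.toReal_sum (fun p _ => measure_ne_top μ _)] at this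
      have h3 : ∑ p ∈ (Finset.univ.offDiag : Finset (Fin n × Fin n)),
          (μ {ω | m * h (κ * u) < |X p.1 ω| ∧ κ * u < X p.2 ω}).toReal ≤ ε/3 * T u := by
        have hTκ := hTpos (κ * u)
        have heq : ∑ p ∈ (Finset.univ.offDiag : Finset (Fin n × Fin n)),
            (μ {ω | m * h (κ * u) < |X p.1 ω| ∧ κ * u < X p.2 ω}).toReal =
            (∑ p ∈ (Finset.univ.offDiag : Finset (Fin n × Fin n)),
              (μ {ω | m * h (κ * u) < |X p.1 ω| ∧ κ * u < X p.2 ω}).toReal / T (κ * u))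
              * T (κ * u) := by
          rw [Finset.sum_mul]
          exact Finset.sum_congr rfl fun p _ => (div_mul_cancel₀ _ hTκ.ne').symm
        rw [heq]
        calc (∑ p ∈ (Finset.univ.offDiag : Finset (Fin n × Fin n)),
              (μ {ω | m * h (κ * u) < |X p.1 ω| ∧ κ * u < X p.2 ω}).toReal / T (κ * u))
              * T (κ * u)
            ≤ (ε/3 * m') * T (κ * u) :=
              mul_le_mul_of_nonneg_right (le_of_lt hc8) (le_of_lt hTκ)
          _ = (ε/3) * (m' * T (κ * u)) := by ring
          _ ≤ ε/3 * T u := mul_le_mul_of_nonneg_left hc5 (by positivity)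
      have h4 : Num / T u ≤ T (u + (-D1) * h u) / T u + ε/3 := by
        rw [div_add' _ _ _ (hTpos u).ne']
        apply div_le_div_of_nonneg_right ?_ (hTpos u).le
        · linarith
      have h5 : T (u + (-D1) * h u) / T u < 1 + ε/3 := by
        have := abs_lt.mp hc7
        linarith [this.2]
      linarith
    -- LOWER BOUND
    have hincl_low : {ω | u + D1 * h u < maxRV X ω} ⊆
        {ω | x < ∑ i, c i * ordDesc X i ω} ∪
        ⋃ p ∈ (Finset.univ.offDiag : Finset (Fin n × Fin n)),
          {ω | 1 * h u < |X p.1 ω| ∧ u < X p.2 ω} := by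
      intro ω hω
      simp only [Set.mem_setOf_eq] at hω
      by_cases hBad : ω ∈ ⋃ p ∈ (Finset.univ.offDiag : Finset (Fin n × Fin n)),
          {ω | 1 * h u < |X p.1 ω| ∧ u < X p.2 ω}
      · right; exact hBad
      · left
        simp only [Set.mem_iUnion, Set.mem_setOf_eq, not_exists, not_and] at hBad
        obtain ⟨js, hjs⟩ := exists_lt_of_lt_ciSup (show u + D1 * h u < ⨆ i, X i ω from hω)
        have hD1h : 0 ≤ D1 * h u := by positivity
        have hjsu : u < X js ω := by linarith
        have hsmall : ∀ i : Fin n, i ≠ js → |X i ω| ≤ h u := by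
          intro i hi
          by_contra hcon
          push_neg at hcon
          have hmem : (i, js) ∈ (Finset.univ.offDiag : Finset (Fin n × Fin n)) :=
            Finset.mem_offDiag.mpr ⟨Finset.mem_univ _, Finset.mem_univ _, hi⟩
          exact absurd hjsu (by simpa using hBad (i, js) hmem (by rw [one_mul]; exact hcon))
        have hbig : h u < X js ω := lt_of_le_of_lt (by linarith) hjsu
        have habs : ∀ i : Fin n, i ≠ 0 → |ordDesc X i ω| ≤ h u :=
          fun i hi => OrdAux.abs_ordDesc_le X ω hβ hbig hsmall hi
        have hsplit : ∑ i, c i * ordDesc X i ω =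
            c 0 * ordDesc X 0 ω + ∑ i ∈ Finset.univ.erase 0, c i * ordDesc X i ω :=
          (Finset.add_sum_erase _ _ (Finset.mem_univ 0)).symm
        have hlow : -((n:ℝ) * (d * h u)) ≤ ∑ i ∈ Finset.univ.erase 0, c i * ordDesc X i ω := by
          have := MAux2.sum_erase_le c (fun i => -(ordDesc X i ω)) hd hβ hcd
            (fun i hi => by
              have hai := abs_le.mp (habs i hi)
              show -(ordDesc X i ω) ≤ h u
              linarith [hai.1])
          have hneg : ∑ i ∈ Finset.univ.erase 0, c i * -(ordDesc X i ω) =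
              -∑ i ∈ Finset.univ.erase 0, c i * ordDesc X i ω := by
            rw [← Finset.sum_neg_distrib]
            exact Finset.sum_congr rfl fun i _ => by ring
          rw [hneg] at this
          linarith
        have hord0 : u + D1 * h u < ordDesc X 0 ω := by
          rw [OrdAux.ordDesc_zero]
          exact hω
        have haD1 : a * D1 = (n:ℝ) * d := by
          rw [hD1def]
          field_simp
        have hkey : c 0 * (u + D1 * h u) ≥ x + (n:ℝ) * (d * h u) := by
          have h1 : c 0 * (D1 * h u) ≥ a * (D1 * h u) :=
            mul_le_mul_of_nonneg_right hc0a hD1h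
          have h2 : c 0 * u = x := by rw [hxeq]; ring
          nlinarith
        simp only [Set.mem_setOf_eq]
        rw [hsplit]
        have : c 0 * (u + D1 * h u) < c 0 * ordDesc X 0 ω :=
          mul_lt_mul_of_pos_left hord0 hc0
        linarith
    have hlowb : 1 - (ε/3 + ε/3) < Num / T u := by
      have h1 : μ {ω | u + D1 * h u < maxRV X ω} ≤
          μ {ω | x < ∑ i, c i * ordDesc X i ω} +
          ∑ p ∈ (Finset.univ.offDiag : Finset (Fin n × Fin n)),
            μ {ω | 1 * h u < |X p.1 ω| ∧ u < X p.2 ω} :=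
        (measure_mono hincl_low).trans ((measure_union_le _ _).trans
          (add_le_add_right (measure_biUnion_finset_le _ _) _))
      have hfin : μ {ω | x < ∑ i, c i * ordDesc X i ω} +
          ∑ p ∈ (Finset.univ.offDiag : Finset (Fin n × Fin n)),
            μ {ω | 1 * h u < |X p.1 ω| ∧ u < X p.2 ω} ≠ ⊤ :=
        ENNReal.add_ne_top.mpr ⟨measure_ne_top μ _,
          (ENNReal.sum_lt_top.mpr fun p _ => measure_lt_top μ _).ne⟩
      have h2 : T (u + D1 * h u) ≤ Num +
          ∑ p ∈ (Finset.univ.offDiag : Finset (Fin n × Fin n)),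
            (μ {ω | 1 * h u < |X p.1 ω| ∧ u < X p.2 ω}).toReal := by
        have := ENNReal.toReal_mono hfin h1
        rwa [ENNReal.toReal_add (measure_ne_top μ _)
            ((ENNReal.sum_lt_top.mpr fun p _ => measure_lt_top μ _).ne),
          ENNReal.toReal_sum (fun p _ => measure_ne_top μ _)] at this
      have h3 : ∑ p ∈ (Finset.univ.offDiag : Finset (Fin n × Fin n)),
          (μ {ω | 1 * h u < |X p.1 ω| ∧ u < X p.2 ω}).toReal ≤ ε/3 * T u := by
        have heq : ∑ p ∈ (Finset.univ.offDiag : Finset (Fin n × Fin n)),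
            (μ {ω | 1 * h u < |X p.1 ω| ∧ u < X p.2 ω}).toReal =
            (∑ p ∈ (Finset.univ.offDiag : Finset (Fin n × Fin n)),
              (μ {ω | 1 * h u < |X p.1 ω| ∧ u < X p.2 ω}).toReal / T u) * T u := by
          rw [Finset.sum_mul]
          exact Finset.sum_congr rfl fun p _ => (div_mul_cancel₀ _ (hTpos u).ne').symm
        rw [heq]
        exact mul_le_mul_of_nonneg_right (le_of_lt hc9) (le_of_lt (hTpos u))
      have h4 : T (u + D1 * h u) / T u - ε/3 ≤ Num / T u := by
        have h5 : (T (u + D1 * h u) - ε/3 * T u) / T u ≤ Num / T u := by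
          apply div_le_div_of_nonneg_right ?_ (hTpos u).le
          · linarith
        have h6 : (T (u + D1 * h u) - ε/3 * T u) / T u = T (u + D1 * h u) / T u - ε/3 := by
          rw [sub_div, mul_div_assoc, div_self (hTpos u).ne', mul_one]
        linarith [h5, h6.symm.le]
      have h7 : 1 - ε/3 < T (u + D1 * h u) / T u := by
        have := abs_lt.mp hc6
        linarith [this.1]
      linarith
    rw [abs_lt]
    constructor <;> [linarith; linarith]

  · -- second component
    apply MAux2.unif_aux ha hab _ K hKab
    intro ε hε
    have hR := MAux.T_div_S_tendsto hXm hTpos hpair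
    rw [Metric.tendsto_atTop] at hR
    obtain ⟨U, hU⟩ := hR ε hε
    refine ⟨U, fun x c hc hxU => ?_⟩
    have hc0 : 0 < c 0 := lt_of_lt_of_le ha (hKab c hc).1
    have hnum : tailP μ (fun ω => c 0 * maxRV X ω) x = T (x / c 0) :=
      MAux.tailP_smul hc0
    have hden : ∑ i, tailP μ (fun ω => c 0 * X i ω) x = ∑ i, tailP μ (X i) (x / c 0) :=
      Finset.sum_congr rfl fun i _ => MAux.tailP_smul hc0
    rw [hnum, hden]
    have := hU (x / c 0) hxU
    rw [Real.dist_eq] at this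
    rw [abs_sub_comm] at this
    exact this
end
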